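/- Equivalence of the attachment-path contraction: let 𝓘 be an Activation 2-DP Augmentation instance with path P, and let 𝓘̂ be the 3-cost Hamiltonian instance obtained by replacing, for every pair u,v ∈ V(P) and every pair of levels (l_u,l_v), the cheapest attachment u–v path Q(l_u,l_v) with activation costs l_u at u and l_v at v by a single u–v edge with activation costs l_u, l_v and middle cost equal to the activation cost of Q(l_u,l_v) on its internal nodes, then deleting all nodes not on P. Then every feasible solution of 𝓘 can be converted into a feasible solution of 𝓘̂ of no greater total cost, and vice versa; in particular the two instances have equal optimal values. -/

import Mathlib

open SimpleGraph

def TwoDisjointPaths {V : Type*} (G : SimpleGraph V) (s t : V) : Prop :=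
  ∃ p q : G.Walk s t, p.IsPath ∧ q.IsPath ∧
    ∀ v, v ∈ p.support → v ∈ q.support → v = s ∨ v = t

open Classical in
/-- `ℓ_F(v) = max { c_e^v : e ∈ δ_F(v) }`. -/
noncomputable def ell (c : Sym2 ℕ → ℕ → NNReal) (F : Finset (Sym2 ℕ)) (v : ℕ) : NNReal :=
  (F.filter (fun e => v ∈ e)).sup (fun e => c e v)

/-- `Q` is an attachment `u`-`v` path: a path with both endpoints on `P` and no internal
node on `P`. -/
def IsAttach (E0 : Finset (Sym2 ℕ)) {s t : ℕ}
    (P : (fromEdgeSet (↑E0 : Set (Sym2 ℕ))).Walk s t) (u v : ℕ)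
    (Q : (fromEdgeSet (↑E0 : Set (Sym2 ℕ))).Walk u v) : Prop :=
  Q.IsPath ∧ u ∈ P.support ∧ v ∈ P.support ∧
    ∀ w ∈ Q.support, w ≠ u → w ≠ v → w ∉ P.support

/-- A chord `d = (u, v, l_u, l_v)` of the contracted instance `𝓘̂` is legitimate if there
is an attachment `u`-`v` path with activation cost `l_u` at `u` and `l_v` at `v`. -/
def ChordOK (E0 : Finset (Sym2 ℕ)) (c : Sym2 ℕ → ℕ → NNReal) {s t : ℕ}
    (P : (fromEdgeSet (↑E0 : Set (Sym2 ℕ))).Walk s t)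
    (d : ℕ × ℕ × NNReal × NNReal) : Prop :=
  ∃ Q : (fromEdgeSet (↑E0 : Set (Sym2 ℕ))).Walk d.1 d.2.1, IsAttach E0 P d.1 d.2.1 Q ∧
    ell c Q.edges.toFinset d.1 = d.2.2.1 ∧ ell c Q.edges.toFinset d.2.1 = d.2.2.2

/-- The middle cost of a chord `d = (u, v, l_u, l_v)`: the cheapest activation cost on
internal nodes of an attachment `u`-`v` path with endpoint activation costs `l_u, l_v`. -/
noncomputable def mcost (E0 : Finset (Sym2 ℕ)) (c : Sym2 ℕ → ℕ → NNReal) (Vfin : Finset ℕ)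
    {s t : ℕ} (P : (fromEdgeSet (↑E0 : Set (Sym2 ℕ))).Walk s t)
    (d : ℕ × ℕ × NNReal × NNReal) : NNReal :=
  sInf {a | ∃ Q : (fromEdgeSet (↑E0 : Set (Sym2 ℕ))).Walk d.1 d.2.1,
    IsAttach E0 P d.1 d.2.1 Q ∧
    ell c Q.edges.toFinset d.1 = d.2.2.1 ∧ ell c Q.edges.toFinset d.2.1 = d.2.2.2 ∧
    a = ∑ w ∈ Vfin \ {d.1, d.2.1}, ell c Q.edges.toFinset w}

/-- A feasible solution of the instance `𝓘`: an edge set `F ⊆ E` such that `P ∪ F`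
contains two internally disjoint `s`-`t` paths. -/
def Feas1 (E0 : Finset (Sym2 ℕ)) {s t : ℕ}
    (P : (fromEdgeSet (↑E0 : Set (Sym2 ℕ))).Walk s t) (F : Finset (Sym2 ℕ)) : Prop :=
  F ⊆ E0 ∧ TwoDisjointPaths (fromEdgeSet ((↑F : Set (Sym2 ℕ)) ∪ {e | e ∈ P.edges})) s t

/-- The cost of a feasible solution of `𝓘`: `ℓ_F(V)`. -/
noncomputable def Cost1 (c : Sym2 ℕ → ℕ → NNReal) (Vfin : Finset ℕ)
    (F : Finset (Sym2 ℕ)) : NNReal :=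
  ∑ v ∈ Vfin, ell c F v

/-- A feasible solution of the contracted 3-cost Hamiltonian instance `𝓘̂`: a set `D` of
legitimate chords such that `P` together with the chord edges contains two internally
disjoint `s`-`t` paths. -/
def Feas2 (E0 : Finset (Sym2 ℕ)) (c : Sym2 ℕ → ℕ → NNReal) {s t : ℕ}
    (P : (fromEdgeSet (↑E0 : Set (Sym2 ℕ))).Walk s t)
    (D : Finset (ℕ × ℕ × NNReal × NNReal)) : Prop :=
  (∀ d ∈ D, ChordOK E0 c P d) ∧
    TwoDisjointPaths
      (fromEdgeSet ({e | e ∈ P.edges} ∪ {e | ∃ d ∈ D, e = s(d.1, d.2.1)})) s t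

open Classical in
/-- The total cost `τ(D)` of a solution of `𝓘̂`: activation cost (at each node, the
maximum level forced by an incident chord) plus the middle costs of the chords. -/
noncomputable def Cost2 (E0 : Finset (Sym2 ℕ)) (c : Sym2 ℕ → ℕ → NNReal) (Vfin : Finset ℕ)
    {s t : ℕ} (P : (fromEdgeSet (↑E0 : Set (Sym2 ℕ))).Walk s t)
    (D : Finset (ℕ × ℕ × NNReal × NNReal)) : NNReal :=
  (∑ v ∈ Vfin, (D.filter (fun d => d.1 = v ∨ d.2.1 = v)).sup
      (fun d => if d.1 = v then d.2.2.1 else d.2.2.2))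
    + ∑ d ∈ D, mcost E0 c Vfin P d

section ZZHelpers
open SimpleGraph Classical
set_option maxHeartbeats 1000000

abbrev zzG (E : Finset (Sym2 ℕ)) : SimpleGraph ℕ := fromEdgeSet (↑E : Set (Sym2 ℕ))

/-- every support vertex is the start or lies on an edge -/
lemma zz_support_char {V : Type*} {G : SimpleGraph V} {a b : V} (W : G.Walk a b) :
    ∀ r ∈ W.support, r = a ∨ ∃ f ∈ W.edges, r ∈ f := by
  induction W with
  | nil => intro r hr; simp at hr; exact Or.inl hr
  | @cons u v w h p ih =>
    intro r hr
    rw [Walk.support_cons, List.mem_cons] at hr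
    rcases hr with h1 | h2
    · exact Or.inl h1
    · rcases ih r h2 with h3 | ⟨f, hf, hrf⟩
      · exact Or.inr ⟨s(u, v), by simp, by simp [h3]⟩
      · exact Or.inr ⟨f, by simp [hf], hrf⟩

lemma zz_mem_support_of_mem_edges {V : Type*} {G : SimpleGraph V} {a b : V} (W : G.Walk a b)
    {f : Sym2 V} (hf : f ∈ W.edges) {r : V} (hr : r ∈ f) : r ∈ W.support := by
  induction f with
  | _ x y =>
    rcases Sym2.mem_iff.mp hr with h | h
    · subst h; exact W.fst_mem_support_of_mem_edges hf
    · subst h; exact W.snd_mem_support_of_mem_edges hf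

/-- prefix of a path to an interior vertex, avoiding the endpoint -/
lemma zz_prefixAvoid {V : Type*} {G : SimpleGraph V} {a b : V} (W : G.Walk a b)
    (hW : W.IsPath) {z : V} (hz : z ∈ W.support) (hzb : z ≠ b) :
    ∃ ρ : G.Walk a z, ρ.IsPath ∧ (∀ r ∈ ρ.support, r ∈ W.support) ∧
      (∀ f ∈ ρ.edges, f ∈ W.edges) ∧ b ∉ ρ.support := by
  induction W with
  | nil => simp at hz; exact absurd hz hzb
  | @cons u v w h p ih =>
    by_cases hza : z = u
    · subst hza
      refine ⟨Walk.nil, by simp, ?_, by simp, ?_⟩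
      · intro r hr; simp at hr; simp [hr]
      · simp only [Walk.support_nil, List.mem_singleton]
        rintro rfl; exact hzb rfl
    · have hz' : z ∈ p.support := by
        rw [Walk.support_cons, List.mem_cons] at hz; tauto
      obtain ⟨ρ, hρ1, hρ2, hρ3, hρ4⟩ := ih hW.of_cons hz' hzb
      refine ⟨Walk.cons h ρ, ?_, ?_, ?_, ?_⟩
      · obtain ⟨hWp, hWu⟩ := (Walk.cons_isPath_iff h p).mp hW
        rw [Walk.isPath_def, Walk.support_cons, List.nodup_cons]
        exact ⟨fun hc => hWu (hρ2 u hc), (Walk.isPath_def _).mp hρ1⟩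
      · intro r hr
        rw [Walk.support_cons, List.mem_cons] at hr
        rcases hr with h1 | h2
        · simp [h1]
        · rw [Walk.support_cons]; exact List.mem_cons_of_mem _ (hρ2 r h2)
      · intro f hf
        rw [Walk.edges_cons, List.mem_cons] at hf
        rcases hf with h1 | h2
        · simp [h1]
        · rw [Walk.edges_cons]; exact List.mem_cons_of_mem _ (hρ3 f h2)
      · rw [Walk.support_cons, List.mem_cons]
        rintro (h1 | h2)
        · obtain ⟨hWp, hWu⟩ := (Walk.cons_isPath_iff h p).mp hW
          exact hWu (h1 ▸ p.end_mem_support)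
        · exact hρ4 h2

/-- truncate a walk at its first hit of a set `T` -/
lemma zz_firstHit {V : Type*} {G : SimpleGraph V} {a b : V} (W : G.Walk a b)
    (T : Set V) (hhit : ∃ r ∈ W.support, r ∈ T) :
    ∃ z ∈ T, ∃ ρ : G.Walk a z, (∀ r ∈ ρ.support, r ∈ W.support) ∧
      (∀ f ∈ ρ.edges, f ∈ W.edges) ∧ (∀ r ∈ ρ.support, r ∈ T → r = z) ∧
      (W.IsPath → ρ.IsPath) := by
  induction W with
  | nil =>
    obtain ⟨r, hr, hrT⟩ := hhit
    simp only [Walk.support_nil, List.mem_singleton] at hr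
    exact ⟨_, hr ▸ hrT, Walk.nil, by simp, by simp, by simp, fun _ => by simp⟩
  | @cons u v w h p ih =>
    by_cases huT : u ∈ T
    · refine ⟨u, huT, Walk.nil, by simp, by simp, by simp, fun _ => by simp⟩
    · have hhit' : ∃ r ∈ p.support, r ∈ T := by
        obtain ⟨r, hr, hrT⟩ := hhit
        rw [Walk.support_cons, List.mem_cons] at hr
        rcases hr with rfl | hr
        · exact absurd hrT huT
        · exact ⟨r, hr, hrT⟩
      obtain ⟨z, hzT, ρ, h1, h2, h3, h4⟩ := ih hhit'
      refine ⟨z, hzT, Walk.cons h ρ, ?_, ?_, ?_, ?_⟩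
      · intro r hr
        rw [Walk.support_cons, List.mem_cons] at hr ⊢
        rcases hr with rfl | hr
        · exact Or.inl rfl
        · exact Or.inr (h1 r hr)
      · intro f hf
        rw [Walk.edges_cons, List.mem_cons] at hf ⊢
        rcases hf with rfl | hf
        · exact Or.inl rfl
        · exact Or.inr (h2 f hf)
      · intro r hr hrT
        rw [Walk.support_cons, List.mem_cons] at hr
        rcases hr with rfl | hr
        · exact absurd hrT huT
        · exact h3 r hr hrT
      · intro hW
        obtain ⟨hWp, hWu⟩ := (Walk.cons_isPath_iff h p).mp hW
        rw [Walk.isPath_def, Walk.support_cons, List.nodup_cons]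
        exact ⟨fun hc => hWu (h1 u hc), (Walk.isPath_def _).mp (h4 hWp)⟩

/-- split a path at (the unique traversal of) an edge -/
lemma zz_splitAtEdge {V : Type*} {G : SimpleGraph V} {a b : V} (W : G.Walk a b)
    (hW : W.IsPath) {x y : V} (he : s(x, y) ∈ W.edges) :
    ∃ z w, s(z, w) = s(x, y) ∧ ∃ (p : G.Walk a z) (q : G.Walk w b),
      p.IsPath ∧ q.IsPath ∧ s(x, y) ∉ p.edges ∧ s(x, y) ∉ q.edges ∧
      (∀ f ∈ p.edges, f ∈ W.edges) ∧ (∀ f ∈ q.edges, f ∈ W.edges) ∧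
      (∀ r, r ∈ p.support → r ∈ q.support → False) ∧
      (∀ r ∈ p.support, r ∈ W.support) ∧ (∀ r ∈ q.support, r ∈ W.support) := by
  induction W with
  | nil => simp at he
  | @cons u v w h p ih =>
    rw [Walk.edges_cons, List.mem_cons] at he
    by_cases hfirst : s(u, v) = s(x, y)
    · refine ⟨u, v, hfirst, Walk.nil, p, by simp, hW.of_cons, by simp, ?_, by simp,
        fun f hf => by rw [Walk.edges_cons]; exact List.mem_cons_of_mem _ hf, ?_, ?_, ?_⟩
      · rw [← hfirst]
        have hnd := hW.isTrail.edges_nodup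
        rw [Walk.edges_cons, List.nodup_cons] at hnd
        exact hnd.1
      · intro r hr hr2
        simp only [Walk.support_nil, List.mem_singleton] at hr
        subst hr
        exact ((Walk.cons_isPath_iff h p).mp hW).2 hr2
      · intro r hr; simp at hr; simp [hr]
      · intro r hr; rw [Walk.support_cons]; exact List.mem_cons_of_mem _ hr
    · have he' : s(x, y) ∈ p.edges := by tauto
      obtain ⟨z, w', hzw, p', q', h1, h2, h3, h4, h5, h6, h7, h8, h9⟩ := ih hW.of_cons he'
      obtain ⟨hWp, hWu⟩ := (Walk.cons_isPath_iff h p).mp hW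
      refine ⟨z, w', hzw, Walk.cons h p', q', ?_, h2, ?_, h4, ?_, ?_, ?_, ?_, ?_⟩
      · rw [Walk.isPath_def, Walk.support_cons, List.nodup_cons]
        exact ⟨fun hc => hWu (h8 u hc), (Walk.isPath_def _).mp h1⟩
      · rw [Walk.edges_cons, List.mem_cons]
        rintro (h' | h')
        · exact hfirst h'.symm
        · exact h3 h'
      · intro f hf
        rw [Walk.edges_cons, List.mem_cons] at hf ⊢
        rcases hf with rfl | hf
        · exact Or.inl rfl
        · exact Or.inr (h5 f hf)
      · intro f hf
        rw [Walk.edges_cons]; exact List.mem_cons_of_mem _ (h6 f hf)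
      · intro r hr hr2
        rw [Walk.support_cons, List.mem_cons] at hr
        rcases hr with rfl | hr
        · exact hWu (h9 r hr2)
        · exact h7 r hr hr2
      · intro r hr
        rw [Walk.support_cons, List.mem_cons] at hr ⊢
        rcases hr with rfl | hr
        · exact Or.inl rfl
        · exact Or.inr (h8 r hr)
      · intro r hr
        rw [Walk.support_cons]; exact List.mem_cons_of_mem _ (h9 r hr)


def zzSep (E : Finset (Sym2 ℕ)) (A B T : Set ℕ) : Prop :=
  ∀ a ∈ A, ∀ b ∈ B, ∀ W : (zzG E).Walk a b, ∃ r ∈ W.support, r ∈ T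

def zzDis (E : Finset (Sym2 ℕ)) (A B : Set ℕ) : Prop :=
  ∃ a₁ ∈ A, ∃ b₁ ∈ B, ∃ a₂ ∈ A, ∃ b₂ ∈ B,
    ∃ (W₁ : (zzG E).Walk a₁ b₁) (W₂ : (zzG E).Walk a₂ b₂),
      W₁.IsPath ∧ W₂.IsPath ∧ ∀ r, r ∈ W₁.support → r ∈ W₂.support → False

lemma zz_sep_symm {E : Finset (Sym2 ℕ)} {A B T : Set ℕ} (h : zzSep E A B T) :
    zzSep E B A T := by
  intro b hb a ha W
  obtain ⟨r, hr, hrT⟩ := h a ha b hb W.reverse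
  rw [Walk.support_reverse, List.mem_reverse] at hr
  exact ⟨r, hr, hrT⟩

lemma zz_notSep {E : Finset (Sym2 ℕ)} {A B : Set ℕ} {τ : ℕ} (h : ¬ zzSep E A B {τ}) :
    ∃ a ∈ A, ∃ b ∈ B, ∃ W : (zzG E).Walk a b, τ ∉ W.support := by
  unfold zzSep at h
  push_neg at h
  obtain ⟨a, ha, b, hb, W, hW⟩ := h
  exact ⟨a, ha, b, hb, W, fun hc => hW τ hc rfl⟩

lemma zz_sep_of_not {E : Finset (Sym2 ℕ)} {A B : Set ℕ} {τ : ℕ}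
    (h : ¬ ∃ a ∈ A, ∃ b ∈ B, ∃ W : (zzG E).Walk a b, τ ∉ W.support) :
    zzSep E A B {τ} := by
  intro a ha b hb W
  by_cases hc : τ ∈ W.support
  · exact ⟨τ, hc, rfl⟩
  · exact absurd ⟨a, ha, b, hb, W, hc⟩ h

lemma zz_erase_le {E : Finset (Sym2 ℕ)} {e : Sym2 ℕ} : zzG (E.erase e) ≤ zzG E :=
  fromEdgeSet_mono (by intro f hf; exact Finset.mem_coe.mpr (Finset.mem_of_mem_erase (Finset.mem_coe.mp hf)))

/-- lift a walk along a subgraph relation -/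
lemma zz_lift_edges {G H : SimpleGraph ℕ} (hle : G ≤ H) {a b : ℕ} (W : G.Walk a b) :
    ∀ f ∈ W.edges, f ∈ H.edgeSet :=
  fun f hf => (SimpleGraph.edgeSet_mono hle) (W.edges_subset_edgeSet hf)

/-- transfer into an erased edge set when the edge is unused -/
lemma zz_erase_edges {E : Finset (Sym2 ℕ)} {e : Sym2 ℕ} {a b : ℕ} (W : (zzG E).Walk a b)
    (he : e ∉ W.edges) : ∀ f ∈ W.edges, f ∈ (zzG (E.erase e)).edgeSet := by
  intro f hf
  have h1 := W.edges_subset_edgeSet hf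
  rw [edgeSet_fromEdgeSet] at h1 ⊢
  refine ⟨Finset.mem_coe.mpr (Finset.mem_erase.mpr ⟨?_, Finset.mem_coe.mp h1.1⟩), h1.2⟩
  rintro rfl; exact he hf

lemma zz_routeA (E : Finset (Sym2 ℕ)) (A B : Set ℕ) (x y v t1 : ℕ) (e : Sym2 ℕ)
    (hexy : e = s(x, y)) (hSv : zzSep (E.erase e) A B {v})
    (hT1 : zzSep (E.erase e) A {v, x} {t1})
    (a b : ℕ) (ha : a ∈ A) (hb : b ∈ B) (R0 : (zzG E).Walk a b) (hR0 : t1 ∉ R0.support) :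
    ∃ a' ∈ A, ∃ b' ∈ B, ∃ (p : (zzG (E.erase e)).Walk a' y) (q : (zzG (E.erase e)).Walk x b'),
      v ∉ p.support ∧ t1 ∉ p.support ∧ t1 ∉ q.support ∧
      (∀ r, r ∈ p.support → r ∈ q.support → False) := by
  subst hexy
  set R := R0.bypass with hR
  have hRpath : R.IsPath := R0.bypass_isPath
  have hRt1 : t1 ∉ R.support := fun hc => hR0 (R0.support_bypass_subset hc)
  by_cases he : s(x, y) ∈ R.edges
  · obtain ⟨z, w, hzw, p', q', hp', hq', hep, heq, hpe, hqe, hdisj, hpsup, hqsup⟩ :=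
      zz_splitAtEdge R hRpath he
    obtain ⟨hz, hw⟩ | ⟨hz, hw⟩ := Sym2.eq_iff.mp hzw
    · -- z = x : prefix a⇝x in the erased graph hits t1, contradiction
      subst z; subst w
      exfalso
      obtain ⟨r, hr, hrT⟩ := hT1 a ha x (by simp)
        (p'.transfer _ (zz_erase_edges p' hep))
      rw [Walk.support_transfer] at hr
      rw [Set.mem_singleton_iff] at hrT
      exact hRt1 (hrT ▸ hpsup r hr)
    · -- z = y : the desired decomposition
      subst z; subst w
      refine ⟨a, ha, b, hb, p'.transfer _ (zz_erase_edges p' hep),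
        q'.transfer _ (zz_erase_edges q' heq), ?_, ?_, ?_, ?_⟩
      · rw [Walk.support_transfer]
        intro hv
        obtain ⟨r, hr, hrT⟩ := hT1 a ha v (by simp)
          ((p'.transfer _ (zz_erase_edges p' hep)).takeUntil v
            (by rw [Walk.support_transfer]; exact hv))
        rw [Set.mem_singleton_iff] at hrT
        subst hrT
        have h9 := Walk.support_takeUntil_subset _ _ hr
        rw [Walk.support_transfer] at h9
        exact hRt1 (hpsup r h9)
      · rw [Walk.support_transfer]; exact fun hc => hRt1 (hpsup t1 hc)
      · rw [Walk.support_transfer]; exact fun hc => hRt1 (hqsup t1 hc)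
      · intro r hr1 hr2
        rw [Walk.support_transfer] at hr1 hr2
        exact hdisj r hr1 hr2
  · exfalso
    obtain ⟨r, hr, hrT⟩ := hSv a ha b hb (R.transfer _ (zz_erase_edges R he))
    rw [Set.mem_singleton_iff] at hrT
    subst hrT
    obtain ⟨r2, hr2, hrT2⟩ := hT1 a ha r (by simp)
      ((R.transfer _ (zz_erase_edges R he)).takeUntil r hr)
    rw [Set.mem_singleton_iff] at hrT2
    subst hrT2
    have h5 := Walk.support_takeUntil_subset _ _ hr2
    rw [Walk.support_transfer] at h5
    exact hRt1 h5

lemma zz_L1 (E : Finset (Sym2 ℕ)) (A B : Set ℕ) (x y v t1 t2 : ℕ) (e : Sym2 ℕ)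
    (hexy : e = s(x, y))
    (hfree : ∀ τ : ℕ, ∃ a ∈ A, ∃ b ∈ B, ∃ W : (zzG E).Walk a b, τ ∉ W.support)
    (hSv : zzSep (E.erase e) A B {v})
    (hT1 : zzSep (E.erase e) A {v, x} {t1})
    (hT2 : zzSep (E.erase e) A {v, y} {t2}) : False := by
  obtain ⟨a, ha, b, hb, R1, hR1⟩ := hfree t1
  obtain ⟨a1, ha1, b1, hb1, p1, q1, hvp1, ht1p1, ht1q1, hdisj1⟩ :=
    zz_routeA E A B x y v t1 e hexy hSv hT1 a b ha hb R1 hR1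
  -- p1 : a1 ⇝ y, q1 : x ⇝ b1 ; t2 ∈ p1 since p1 is an A–{v,y} walk
  have ht2p1 : t2 ∈ p1.support := by
    obtain ⟨r, hr, hrT⟩ := hT2 a1 ha1 y (by simp) p1
    rw [Set.mem_singleton_iff] at hrT
    exact hrT ▸ hr
  obtain ⟨a2, ha2, b2, hb2, R2, hR2⟩ := hfree t2
  obtain ⟨a2', ha2', b2', hb2', p2, q2, hvp2, ht2p2, ht2q2, hdisj2⟩ :=
    zz_routeA E A B y x v t2 e (by rw [hexy, Sym2.eq_swap]) hSv hT2
      a2 b2 ha2 hb2 R2 hR2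
  -- p2 : a2' ⇝ x, q2 : y ⇝ b2' ; glue p2 with q1
  have hvW : v ∈ (p2.append q1).support := by
    obtain ⟨r, hr, hrT⟩ := hSv a2' ha2' b1 hb1 (p2.append q1)
    rw [Set.mem_singleton_iff] at hrT
    exact hrT ▸ hr
  obtain ⟨r, hr, hrT⟩ := hT2 a2' ha2' v (by simp) ((p2.append q1).takeUntil v hvW)
  rw [Set.mem_singleton_iff] at hrT
  subst hrT
  have h9 := Walk.support_takeUntil_subset _ hvW hr
  rw [Walk.mem_support_append_iff] at h9
  rcases h9 with h1 | h2
  · exact ht2p2 h1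
  · exact hdisj1 r ht2p1 h2

lemma zz_L2 (E : Finset (Sym2 ℕ)) (A B : Set ℕ) (x y v t2 u2 : ℕ) (e : Sym2 ℕ)
    (hexy : e = s(x, y))
    (hfree : ∀ τ : ℕ, ∃ a ∈ A, ∃ b ∈ B, ∃ W : (zzG E).Walk a b, τ ∉ W.support)
    (hSv : zzSep (E.erase e) A B {v})
    (hT2 : zzSep (E.erase e) A {v, y} {t2})
    (hU2 : zzSep (E.erase e) B {v, y} {u2}) : False := by
  -- A-side: path a⇝x avoiding v in the erased graph, plus suffix from y
  obtain ⟨a2, ha2, b2, hb2, R2, hR2⟩ := hfree t2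
  obtain ⟨a2', ha2', b2', hb2', p2, q2, hvp2, ht2p2, ht2q2, hdisj2⟩ :=
    zz_routeA E A B y x v t2 e (by rw [hexy, Sym2.eq_swap]) hSv hT2
      a2 b2 ha2 hb2 R2 hR2
  -- p2 : a2' ⇝ x with v ∉ p2
  -- B-side: apply routeA with roles of A and B swapped
  obtain ⟨a3, ha3, b3, hb3, R3, hR3⟩ := hfree u2
  have hR3' : u2 ∉ R3.reverse.support := by
    rw [Walk.support_reverse, List.mem_reverse]; exact hR3
  obtain ⟨b4, hb4, a4, ha4, pB, qB, hvpB, hu2pB, hu2qB, hdisjB⟩ :=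
    zz_routeA E B A y x v u2 e (by rw [hexy, Sym2.eq_swap]) (zz_sep_symm hSv) hU2
      b3 a3 hb3 ha3 R3.reverse hR3'
  -- pB : b4 ⇝ x with v ∉ pB ; glue p2 with pB.reverse
  have := hSv a2' ha2' b4 hb4 (p2.append pB.reverse)
  obtain ⟨r, hr, hrT⟩ := this
  rw [Set.mem_singleton_iff] at hrT
  subst hrT
  rw [Walk.mem_support_append_iff] at hr
  rcases hr with h1 | h2
  · exact hvp2 h1
  · rw [Walk.support_reverse, List.mem_reverse] at h2
    exact hvpB h2

lemma zz_append_isPath {G : SimpleGraph ℕ} {a b c : ℕ} (p : G.Walk a b) (q : G.Walk b c)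
    (hp : p.IsPath) (hq : q.IsPath)
    (hdisj : ∀ r, r ∈ p.support → r ∈ q.support → r = b) : (p.append q).IsPath := by
  rw [Walk.isPath_def, Walk.support_append, List.nodup_append]
  refine ⟨hp.support_nodup, ?_, ?_⟩
  · have h1 := hq.support_nodup
    rw [q.support_eq_cons, List.nodup_cons] at h1
    exact h1.2
  · intro r hr1 r₂ hr2 hrr
    subst hrr
    have hrq : r ∈ q.support := by
      rw [q.support_eq_cons]; exact List.mem_cons_of_mem _ hr2
    have hrb : r = b := hdisj r hr1 hrq
    subst hrb
    have h1 := hq.support_nodup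
    rw [q.support_eq_cons, List.nodup_cons] at h1
    exact h1.1 hr2

lemma zz_buildPair (E : Finset (Sym2 ℕ)) (A B : Set ℕ) (x y v : ℕ) (e : Sym2 ℕ)
    (hexy : e = s(x, y)) (heE : e ∈ E) (hxy : x ≠ y) (hvx : v ≠ x) (hvy : v ≠ y)
    (hSv : zzSep (E.erase e) A B {v})
    (IH : ∀ A' B' : Set ℕ,
      (∀ τ, ∃ a ∈ A', ∃ b ∈ B', ∃ W : (zzG (E.erase e)).Walk a b, τ ∉ W.support) →
        zzDis (E.erase e) A' B')
    (hNX : ∀ τ, ¬ zzSep (E.erase e) A {v, x} {τ})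
    (hNY : ∀ τ, ¬ zzSep (E.erase e) B {v, y} {τ}) : zzDis E A B := by
  -- cross-avoidance principle
  have hcross : ∀ (av bv cp cq : ℕ) (p : (zzG (E.erase e)).Walk av cp)
      (q : (zzG (E.erase e)).Walk bv cq), av ∈ A → bv ∈ B →
      (∀ r ∈ p.support, r ≠ v → ∃ ρ : (zzG (E.erase e)).Walk av r, v ∉ ρ.support) →
      (∀ r ∈ q.support, r ≠ v → ∃ ρ : (zzG (E.erase e)).Walk bv r, v ∉ ρ.support) →
      ∀ r, r ∈ p.support → r ∈ q.support → r = v := by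
    intro av bv cp cq p q hav hbv hpav hqav r hrp hrq
    by_contra hrv
    obtain ⟨ρa, hρa⟩ := hpav r hrp hrv
    obtain ⟨ρb, hρb⟩ := hqav r hrq hrv
    obtain ⟨r2, hr2, hrT2⟩ := hSv av hav bv hbv (ρa.append ρb.reverse)
    rw [Set.mem_singleton_iff] at hrT2
    subst hrT2
    rw [Walk.mem_support_append_iff] at hr2
    rcases hr2 with h1 | h2
    · exact hρa h1
    · rw [Walk.support_reverse, List.mem_reverse] at h2
      exact hρb h2
  -- a fan on one side
  have fan : ∀ (C : Set ℕ) (z : ℕ), z ≠ v → v ≠ z →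
      (∀ τ, ¬ zzSep (E.erase e) C {v, z} {τ}) →
      ∃ cv ∈ C, ∃ cx ∈ C, ∃ (pv : (zzG (E.erase e)).Walk cv v)
        (px : (zzG (E.erase e)).Walk cx z),
        pv.IsPath ∧ px.IsPath ∧ z ∉ pv.support ∧ v ∉ px.support ∧
        (∀ r, r ∈ pv.support → r ∈ px.support → False) ∧
        (∀ r ∈ pv.support, r ≠ v → ∃ ρ : (zzG (E.erase e)).Walk cv r, v ∉ ρ.support) ∧
        (∀ r ∈ px.support, r ≠ v → ∃ ρ : (zzG (E.erase e)).Walk cx r, v ∉ ρ.support) := by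
    intro C z hzv hvz hN
    obtain ⟨a1, ha1, c1', hc1', a2, ha2, c2', hc2', π1, π2, hπ1, hπ2, hππ⟩ :=
      IH C {v, z} (fun τ => zz_notSep (hN τ))
    obtain ⟨c1, hc1T, ρ1, hρ1sup, hρ1edg, hρ1only, hρ1path⟩ :=
      zz_firstHit π1 {v, z} ⟨c1', π1.end_mem_support, hc1'⟩
    obtain ⟨c2, hc2T, ρ2, hρ2sup, hρ2edg, hρ2only, hρ2path⟩ :=
      zz_firstHit π2 {v, z} ⟨c2', π2.end_mem_support, hc2'⟩
    have hc12 : c1 ≠ c2 := fun h =>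
      hππ c1 (hρ1sup c1 ρ1.end_mem_support) (by
        rw [h]; exact hρ2sup c2 ρ2.end_mem_support)
    have mkAvoidV : ∀ (a0 : ℕ) (ρ : (zzG (E.erase e)).Walk a0 v), ρ.IsPath →
        (∀ r ∈ ρ.support, r ≠ v → ∃ ρ' : (zzG (E.erase e)).Walk a0 r, v ∉ ρ'.support) := by
      intro a0 ρ hρ r hr hrv
      obtain ⟨ρ', h1, h2, h3, h4⟩ := zz_prefixAvoid ρ hρ hr hrv
      exact ⟨ρ', h4⟩
    have mkAvoidZ : ∀ (a0 : ℕ) (ρ : (zzG (E.erase e)).Walk a0 z), v ∉ ρ.support →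
        (∀ r ∈ ρ.support, r ≠ v → ∃ ρ' : (zzG (E.erase e)).Walk a0 r, v ∉ ρ'.support) := by
      intro a0 ρ hρ r hr _
      exact ⟨ρ.takeUntil r hr, fun hc => hρ (Walk.support_takeUntil_subset _ hr hc)⟩
    have noZ : ∀ (a0 c0 : ℕ) (ρ : (zzG (E.erase e)).Walk a0 c0),
        (∀ r ∈ ρ.support, r ∈ ({v, z} : Set ℕ) → r = c0) → c0 = v → z ∉ ρ.support := by
      intro a0 c0 ρ honly hc0 hc
      have := honly z hc (by simp)
      rw [this] at hzv
      exact hzv hc0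
    have noV : ∀ (a0 c0 : ℕ) (ρ : (zzG (E.erase e)).Walk a0 c0),
        (∀ r ∈ ρ.support, r ∈ ({v, z} : Set ℕ) → r = c0) → c0 = z → v ∉ ρ.support := by
      intro a0 c0 ρ honly hc0 hc
      have := honly v hc (by simp)
      rw [this] at hvz
      exact hvz hc0
    have hdisj12 : ∀ r, r ∈ ρ1.support → r ∈ ρ2.support → False :=
      fun r h1 h2 => hππ r (hρ1sup r h1) (hρ2sup r h2)
    simp only [Set.mem_insert_iff, Set.mem_singleton_iff] at hc1T hc2T
    rcases hc1T with h1 | h1 <;> rcases hc2T with h2 | h2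
    · exact absurd (h1.trans h2.symm) hc12
    · subst h1; subst h2
      exact ⟨a1, ha1, a2, ha2, ρ1, ρ2, hρ1path hπ1, hρ2path hπ2,
        noZ _ _ ρ1 hρ1only rfl, noV _ _ ρ2 hρ2only rfl, hdisj12,
        mkAvoidV _ ρ1 (hρ1path hπ1), mkAvoidZ _ ρ2 (noV _ _ ρ2 hρ2only rfl)⟩
    · subst h1; subst h2
      exact ⟨a2, ha2, a1, ha1, ρ2, ρ1, hρ2path hπ2, hρ1path hπ1,
        noZ _ _ ρ2 hρ2only rfl, noV _ _ ρ1 hρ1only rfl,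
        fun r ha hb => hdisj12 r hb ha,
        mkAvoidV _ ρ2 (hρ2path hπ2), mkAvoidZ _ ρ1 (noV _ _ ρ1 hρ1only rfl)⟩
    · exact absurd (h1.trans h2.symm) hc12
  obtain ⟨av, hav, ax, hax, pv, px, hpvP, hpxP, hxpv, hvpx, hdisjA, hAvoidV, hAvoidX⟩ :=
    fan A x (Ne.symm hvx) hvx hNX
  obtain ⟨bv, hbv, by', hby, qv, qy, hqvP, hqyP, hyqv, hvqy, hdisjB, hBvoidV, hBvoidY⟩ :=
    fan B y (Ne.symm hvy) hvy hNY
  -- first path : pv then qv reversed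
  have hW1 : (pv.append qv.reverse).IsPath := by
    apply zz_append_isPath _ _ hpvP hqvP.reverse
    intro r h1 h2
    rw [Walk.support_reverse, List.mem_reverse] at h2
    exact hcross av bv v v pv qv hav hbv hAvoidV hBvoidV r h1 h2
  -- adjacency x ~ y in the full graph
  have hadjE : (zzG E).Adj x y := by
    rw [fromEdgeSet_adj]
    exact ⟨Finset.mem_coe.mpr (hexy ▸ heE), hxy⟩
  -- transfers
  set pxE := px.transfer (zzG E) (zz_lift_edges zz_erase_le px) with hpxE
  set qyE := qy.transfer (zzG E) (zz_lift_edges zz_erase_le qy) with hqyE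
  have hpxEs : pxE.support = px.support := Walk.support_transfer _ _
  have hqyEs : qyE.support = qy.support := Walk.support_transfer _ _
  have hxqy : x ∉ qy.support := by
    intro hc
    exact hvx (hcross ax by' x y px qy hax hby hAvoidX hBvoidY x
      px.end_mem_support hc).symm
  -- second path : px then edge x-y then qy reversed
  have hW2 : (pxE.append (Walk.cons hadjE qyE.reverse)).IsPath := by
    apply zz_append_isPath _ _ ?_ ?_ ?_
    · rw [hpxE]; exact hpxP.transfer _
    · rw [Walk.cons_isPath_iff]
      constructor
      · rw [hqyE]; exact (hqyP.transfer _).reverse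
      · rw [Walk.support_reverse, List.mem_reverse, hqyEs]
        exact hxqy
    · intro r h1 h2
      rw [Walk.support_cons, List.mem_cons] at h2
      rcases h2 with h2 | h2
      · exact h2
      · rw [Walk.support_reverse, List.mem_reverse, hqyEs] at h2
        rw [hpxEs] at h1
        exfalso
        have hrv := hcross ax by' x y px qy hax hby hAvoidX hBvoidY r h1 h2
        subst hrv
        exact hvqy h2
  refine ⟨av, hav, bv, hbv, ax, hax, by', hby,
    (pv.append qv.reverse).transfer (zzG E)
      (zz_lift_edges zz_erase_le _),
    pxE.append (Walk.cons hadjE qyE.reverse), hW1.transfer _, hW2, ?_⟩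
  intro r hr1 hr2
  rw [Walk.support_transfer, Walk.mem_support_append_iff] at hr1
  rw [Walk.mem_support_append_iff, Walk.support_cons, List.mem_cons] at hr2
  rw [hpxEs] at hr2
  have hr2' : r ∈ px.support ∨ r = x ∨ r ∈ qy.support := by
    rcases hr2 with h | h
    · exact Or.inl h
    · rcases h with h | h
      · exact Or.inr (Or.inl h)
      · rw [Walk.support_reverse, List.mem_reverse, hqyEs] at h
        exact Or.inr (Or.inr h)
  have hr1' : r ∈ pv.support ∨ r ∈ qv.support := by
    rcases hr1 with h | h
    · exact Or.inl h
    · rw [Walk.support_reverse, List.mem_reverse] at h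
      exact Or.inr h
  rcases hr1' with h1 | h1 <;> rcases hr2' with h2 | h2 | h2
  · exact hdisjA r h1 h2
  · exact hxpv (h2 ▸ h1)
  · have := hcross av by' v y pv qy hav hby hAvoidV hBvoidY r h1 h2
    subst this; exact hvqy h2
  · have := hcross ax bv x v px qv hax hbv hAvoidX hBvoidV r h2 h1
    subst this; exact hvpx h2
  · rw [h2] at h1
    exact hvx (hcross ax bv x v px qv hax hbv hAvoidX hBvoidV x
      px.end_mem_support h1).symm
  · exact hdisjB r h1 h2

lemma zz_dis_lift {E : Finset (Sym2 ℕ)} {e : Sym2 ℕ} {A B : Set ℕ}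
    (h : zzDis (E.erase e) A B) : zzDis E A B := by
  obtain ⟨a1, ha1, b1, hb1, a2, ha2, b2, hb2, W1, W2, hP1, hP2, hd⟩ := h
  refine ⟨a1, ha1, b1, hb1, a2, ha2, b2, hb2,
    W1.transfer (zzG E) (zz_lift_edges zz_erase_le W1),
    W2.transfer (zzG E) (zz_lift_edges zz_erase_le W2),
    hP1.transfer _, hP2.transfer _, ?_⟩
  intro r h1 h2
  rw [Walk.support_transfer] at h1 h2
  exact hd r h1 h2

theorem zz_menger : ∀ (n : ℕ) (E : Finset (Sym2 ℕ)), E.card ≤ n → ∀ A B : Set ℕ,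
    (∀ τ : ℕ, ∃ a ∈ A, ∃ b ∈ B, ∃ W : (zzG E).Walk a b, τ ∉ W.support) →
    zzDis E A B := by
  intro n
  induction n with
  | zero =>
    intro E hE A B hfree
    -- E = ∅ : every walk is trivial, so A ∩ B ≠ ∅ with flexibility
    have hE0 : E = ∅ := Finset.card_eq_zero.mp (Nat.le_zero.mp hE)
    subst hE0
    obtain ⟨a, ha, b, hb, W, hW⟩ := hfree 0
    have hab : a = b := by
      cases W with
      | nil => rfl
      | cons h p => simpa using h.1
    subst hab
    obtain ⟨a2, ha2, b2, hb2, W2, hW2⟩ := hfree a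
    have hab2 : a2 = b2 := by
      cases W2 with
      | nil => rfl
      | cons h p => simpa using h.1
    subst hab2
    have hne : a2 ≠ a := fun h => hW2 (h ▸ W2.start_mem_support)
    refine ⟨a, ha, a, hb, a2, ha2, a2, hb2, Walk.nil, Walk.nil, by simp, by simp, ?_⟩
    intro r h1 h2
    simp only [Walk.support_nil, List.mem_singleton] at h1 h2
    exact hne (h2.symm.trans h1)
  | succ n IH =>
    intro E hE A B hfree
    -- trivial cases on A ∩ B
    by_cases htwo : ∃ r1 r2 : ℕ, r1 ≠ r2 ∧ r1 ∈ A ∧ r1 ∈ B ∧ r2 ∈ A ∧ r2 ∈ B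
    · obtain ⟨r1, r2, hne, h1, h2, h3, h4⟩ := htwo
      refine ⟨r1, h1, r1, h2, r2, h3, r2, h4, Walk.nil, Walk.nil, by simp, by simp, ?_⟩
      intro r hh1 hh2
      simp only [Walk.support_nil, List.mem_singleton] at hh1 hh2
      exact hne (hh1.symm.trans hh2)
    by_cases hone : ∃ r : ℕ, r ∈ A ∧ r ∈ B
    · obtain ⟨r0, hr0A, hr0B⟩ := hone
      obtain ⟨a, ha, b, hb, W, hW⟩ := hfree r0
      refine ⟨a, ha, b, hb, r0, hr0A, r0, hr0B, W.bypass, Walk.nil,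
        W.bypass_isPath, by simp, ?_⟩
      intro r h1 h2
      simp only [Walk.support_nil, List.mem_singleton] at h2
      subst h2
      exact hW (W.support_bypass_subset h1)
    -- main case : A ∩ B = ∅, find an edge
    push_neg at hone
    obtain ⟨a0, ha0, b0, hb0, W0, hW0⟩ := hfree 0
    have hab0 : a0 ≠ b0 := fun h => hone a0 ha0 (h ▸ hb0)
    obtain ⟨x, y, e, hexy, heE, hxy⟩ :
        ∃ x y : ℕ, ∃ e : Sym2 ℕ, e = s(x, y) ∧ e ∈ E ∧ x ≠ y := by
      cases W0 with
      | nil => exact absurd rfl hab0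
      | cons h p =>
        rw [fromEdgeSet_adj] at h
        exact ⟨a0, _, s(a0, _), rfl, Finset.mem_coe.mp h.1, h.2⟩
    have hcard : (E.erase e).card ≤ n := by
      have := Finset.card_erase_of_mem heE
      omega
    by_cases hsmall : ∀ τ : ℕ, ∃ a ∈ A, ∃ b ∈ B,
        ∃ W : (zzG (E.erase e)).Walk a b, τ ∉ W.support
    · exact zz_dis_lift (IH (E.erase e) hcard A B hsmall)
    · push_neg at hsmall
      obtain ⟨v, hv⟩ := hsmall
      have hSv : zzSep (E.erase e) A B {v} := by
        intro a ha b hb W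
        exact ⟨v, hv a ha b hb W, rfl⟩
      -- v is distinct from x and y
      have hvnot : ∀ w : ℕ, w ∈ e → v ≠ w := by
        intro w hwe hvw
        subst hvw
        obtain ⟨a, ha, b, hb, W, hW⟩ := hfree v
        by_cases heW : e ∈ W.edges
        · exact hW (zz_mem_support_of_mem_edges W heW hwe)
        · obtain ⟨r, hr, hrT⟩ := hSv a ha b hb (W.transfer _ (zz_erase_edges W heW))
          rw [Set.mem_singleton_iff] at hrT
          subst hrT
          rw [Walk.support_transfer] at hr
          exact hW hr
      have hvx : v ≠ x := hvnot x (by rw [hexy]; simp)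
      have hvy : v ≠ y := hvnot y (by rw [hexy]; simp)
      have IH' : ∀ A' B' : Set ℕ,
          (∀ τ, ∃ a ∈ A', ∃ b ∈ B', ∃ W : (zzG (E.erase e)).Walk a b, τ ∉ W.support) →
          zzDis (E.erase e) A' B' := fun A' B' h => IH (E.erase e) hcard A' B' h
      have hfreeB : ∀ τ : ℕ, ∃ b ∈ B, ∃ a ∈ A, ∃ W : (zzG E).Walk b a, τ ∉ W.support := by
        intro τ
        obtain ⟨a, ha, b, hb, W, hW⟩ := hfree τ
        exact ⟨b, hb, a, ha, W.reverse, by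
          rw [Walk.support_reverse, List.mem_reverse]; exact hW⟩
      -- four smallness cases
      by_cases hAX : ∃ τ, zzSep (E.erase e) A {v, x} {τ}
      · by_cases hBX : ∃ τ, zzSep (E.erase e) B {v, x} {τ}
        · -- L2 with x and y swapped (shared letter x)
          exfalso
          obtain ⟨t, ht⟩ := hAX
          obtain ⟨u, hu⟩ := hBX
          exact zz_L2 E A B y x v t u e (by rw [hexy, Sym2.eq_swap]) hfree hSv ht hu
        · by_cases hAY : ∃ τ, zzSep (E.erase e) A {v, y} {τ}
          · exfalso
            obtain ⟨t1, ht1⟩ := hAX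
            obtain ⟨t2, ht2⟩ := hAY
            exact zz_L1 E A B x y v t1 t2 e hexy hfree hSv ht1 ht2
          · -- pairing : A-{v,y}, B-{v,x} : use buildPair with x ↔ y
            push_neg at hAY hBX
            apply zz_buildPair E A B y x v e (by rw [hexy, Sym2.eq_swap]) heE
              (Ne.symm hxy) hvy hvx hSv IH'
              (fun τ => by
                intro hc
                exact hAY τ hc)
              (fun τ => by
                intro hc
                exact hBX τ hc)
      · by_cases hBY : ∃ τ, zzSep (E.erase e) B {v, y} {τ}
        · by_cases hAY : ∃ τ, zzSep (E.erase e) A {v, y} {τ}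
          · exfalso
            obtain ⟨t, ht⟩ := hAY
            obtain ⟨u, hu⟩ := hBY
            exact zz_L2 E A B x y v t u e hexy hfree hSv ht hu
          · by_cases hBX : ∃ τ, zzSep (E.erase e) B {v, x} {τ}
            · exfalso
              obtain ⟨t1, ht1⟩ := hBY
              obtain ⟨t2, ht2⟩ := hBX
              -- L1 with A := B (roles swapped), x := y, y := x
              exact zz_L1 E B A y x v t1 t2 e (by rw [hexy, Sym2.eq_swap]) hfreeB
                (zz_sep_symm hSv) ht1 ht2
            · push_neg at hAY hBX
              apply zz_buildPair E A B y x v e (by rw [hexy, Sym2.eq_swap]) heE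
                (Ne.symm hxy) hvy hvx hSv IH' (fun τ hc => hAY τ hc) (fun τ hc => hBX τ hc)
        · push_neg at hAX hBY
          exact zz_buildPair E A B x y v e hexy heE hxy hvx hvy hSv IH'
            (fun τ hc => hAX τ hc) (fun τ hc => hBY τ hc)

theorem zz_mengerST (E : Finset (Sym2 ℕ)) (s t : ℕ) (hst : s ≠ t)
    (W0 : (zzG E).Walk s t)
    (havoid : ∀ w : ℕ, w ≠ s → w ≠ t → ∃ W : (zzG E).Walk s t, w ∉ W.support) :
    TwoDisjointPaths (zzG E) s t := by
  classical
  by_cases hadj : (zzG E).Adj s t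
  · refine ⟨Walk.cons hadj Walk.nil, Walk.cons hadj Walk.nil, ?_, ?_, ?_⟩
    · rw [Walk.isPath_def]; simp [hst]
    · rw [Walk.isPath_def]; simp [hst]
    · intro v hv _
      simp only [Walk.support_cons, Walk.support_nil, List.mem_cons,
        List.mem_singleton] at hv
      tauto
  · set E' := E.filter (fun f => s ∉ f ∧ t ∉ f) with hE'
    set A : Set ℕ := {a : ℕ | (zzG E).Adj s a ∧ a ≠ t} with hA
    set B : Set ℕ := {b : ℕ | (zzG E).Adj t b ∧ b ≠ s} with hB
    have hle : zzG E' ≤ zzG E :=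
      fromEdgeSet_mono (by intro f hf; rw [Finset.coe_filter] at hf; exact hf.1)
    -- interiorization
    have hint : ∀ (W : (zzG E).Walk s t), W.IsPath →
        ∃ a ∈ A, ∃ b ∈ B, ∃ ω : (zzG E').Walk a b,
          ∀ r ∈ ω.support, r ∈ W.support ∧ r ≠ s ∧ r ≠ t := by
      intro W hW
      cases W with
      | nil => exact absurd rfl hst
      | @cons _ a _ h W₁ =>
        have hat : a ≠ t := fun h' => hadj (h' ▸ h)
        have has : a ≠ s := h.ne'
        obtain ⟨hW1p, hs1⟩ := (Walk.cons_isPath_iff h W₁).mp hW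
        rcases hρ : W₁.reverse with _ | ⟨h₂, ρ₁⟩
        · exact absurd rfl hat
        · rename_i b
          have hbs : b ≠ s := by
            rintro rfl
            exact hadj h₂.symm
          have hbt : b ≠ t := h₂.ne'
          have hρpath : (Walk.cons h₂ ρ₁).IsPath := hρ ▸ hW1p.reverse
          obtain ⟨hρ1p, ht1⟩ := (Walk.cons_isPath_iff h₂ ρ₁).mp hρpath
          have hρ1sub : ∀ r ∈ ρ₁.support, r ∈ W₁.support := by
            intro r hr
            have : r ∈ (Walk.cons h₂ ρ₁).support := by
              rw [Walk.support_cons]; exact List.mem_cons_of_mem _ hr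
            rw [← hρ, Walk.support_reverse, List.mem_reverse] at this
            exact this
          have hsρ1 : s ∉ ρ₁.support := fun hc => hs1 (hρ1sub s hc)
          -- ω₀ : a ⇝ b in the full graph
          have hedg : ∀ f ∈ ρ₁.reverse.edges, f ∈ (zzG E').edgeSet := by
            intro f hf
            rw [Walk.edges_reverse, List.mem_reverse] at hf
            have hfE := ρ₁.edges_subset_edgeSet hf
            rw [edgeSet_fromEdgeSet] at hfE
            have hsf : s ∉ f := fun hc =>
              hsρ1 (zz_mem_support_of_mem_edges ρ₁ hf hc)
            have htf : t ∉ f := fun hc =>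
              ht1 (zz_mem_support_of_mem_edges ρ₁ hf hc)
            rw [edgeSet_fromEdgeSet]
            refine ⟨?_, hfE.2⟩
            rw [hE', Finset.coe_filter]
            exact ⟨Finset.mem_coe.mp hfE.1, hsf, htf⟩
          refine ⟨a, ⟨h, hat⟩, b, ⟨h₂, hbs⟩, ρ₁.reverse.transfer _ hedg, ?_⟩
          intro r hr
          rw [Walk.support_transfer, Walk.support_reverse, List.mem_reverse] at hr
          refine ⟨?_, fun hc => hsρ1 (hc ▸ hr), fun hc => ht1 (hc ▸ hr)⟩
          rw [Walk.support_cons]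
          exact List.mem_cons_of_mem _ (hρ1sub r hr)
    -- Menger hypothesis
    have hfree : ∀ τ : ℕ, ∃ a ∈ A, ∃ b ∈ B, ∃ W : (zzG E').Walk a b, τ ∉ W.support := by
      intro τ
      by_cases hτ : τ ≠ s ∧ τ ≠ t
      · obtain ⟨W, hW⟩ := havoid τ hτ.1 hτ.2
        obtain ⟨a, ha, b, hb, ω, hω⟩ := hint W.bypass W.bypass_isPath
        exact ⟨a, ha, b, hb, ω, fun hc =>
          hW (W.support_bypass_subset ((hω τ hc).1))⟩
      · obtain ⟨a, ha, b, hb, ω, hω⟩ := hint W0.bypass W0.bypass_isPath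
        refine ⟨a, ha, b, hb, ω, fun hc => ?_⟩
        push_neg at hτ
        obtain ⟨hω1, hω2, hω3⟩ := hω τ hc
        by_cases hts : τ = s
        · exact hω2 hts
        · exact hω3 (hτ hts)
    obtain ⟨a1, ha1, b1, hb1, a2, ha2, b2, hb2, ω1, ω2, hP1, hP2, hdisj⟩ :=
      zz_menger E'.card E' le_rfl A B hfree
    -- supports of E'-walks avoid s and t
    have hos : ∀ (a b : ℕ), a ∈ A → b ∈ B → ∀ (ω : (zzG E').Walk a b),
        ∀ r ∈ ω.support, r ≠ s ∧ r ≠ t := by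
      intro a b ha hb ω r hr
      rcases zz_support_char ω r hr with rfl | ⟨f, hf, hrf⟩
      · exact ⟨ha.1.ne', ha.2⟩
      · have hfE := ω.edges_subset_edgeSet hf
        rw [edgeSet_fromEdgeSet] at hfE
        have := Finset.mem_coe.mp hfE.1
        rw [hE', Finset.mem_filter] at this
        exact ⟨fun hc => this.2.1 (hc ▸ hrf), fun hc => this.2.2 (hc ▸ hrf)⟩
    -- glue s and t on
    have build : ∀ (a b : ℕ) (ha : a ∈ A) (hb : b ∈ B) (ω : (zzG E').Walk a b),
        ω.IsPath → ∃ P : (zzG E).Walk s t, P.IsPath ∧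
          ∀ r ∈ P.support, r = s ∨ r = t ∨ r ∈ ω.support := by
      intro a b ha hb ω hω
      set ωE := ω.transfer (zzG E) (zz_lift_edges hle ω) with hωE
      have hωEs : ωE.support = ω.support := Walk.support_transfer _ _
      refine ⟨Walk.cons ha.1 (ωE.concat hb.1.symm), ?_, ?_⟩
      · rw [Walk.isPath_def, Walk.support_cons, Walk.support_concat,
          List.nodup_cons, List.nodup_append]
        refine ⟨?_, (Walk.isPath_def _).mp (hω.transfer _), by simp, ?_⟩
        · rw [List.mem_append, hωEs]
          rintro (hc | hc)
          · exact (hos a b ha hb ω s hc).1 rfl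
          · simp only [List.mem_singleton] at hc
            exact hst hc
        · intro r hr1 r₂ hr2 hrr
          subst hrr
          simp only [List.mem_singleton] at hr2
          rw [hωEs] at hr1
          rw [hr2] at hr1
          exact (hos a b ha hb ω t hr1).2 rfl
      · intro r hr
        rw [Walk.support_cons, List.mem_cons, Walk.support_concat,
          List.mem_append] at hr
        rcases hr with rfl | hr | hr
        · exact Or.inl rfl
        · rw [hωEs] at hr; exact Or.inr (Or.inr hr)
        · simp only [List.mem_singleton] at hr; exact Or.inr (Or.inl hr)
    obtain ⟨P1, hP1p, hP1s⟩ := build a1 b1 ha1 hb1 ω1 hP1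
    obtain ⟨P2, hP2p, hP2s⟩ := build a2 b2 ha2 hb2 ω2 hP2
    refine ⟨P1, P2, hP1p, hP2p, ?_⟩
    intro r hr1 hr2
    rcases hP1s r hr1 with rfl | rfl | h1
    · exact Or.inl rfl
    · exact Or.inr rfl
    · rcases hP2s r hr2 with rfl | rfl | h2
      · exact Or.inl rfl
      · exact Or.inr rfl
      · exact absurd (hdisj r h1 h2) not_false

lemma zz_ell_le {c : Sym2 ℕ → ℕ → NNReal} {T : Finset (Sym2 ℕ)} {v : ℕ} {X : NNReal}
    (h : ∀ f ∈ T, v ∈ f → c f v ≤ X) : ell c T v ≤ X := by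
  classical
  apply Finset.sup_le
  intro f hf
  rw [Finset.mem_filter] at hf
  exact h f hf.1 hf.2

lemma zz_le_ell {c : Sym2 ℕ → ℕ → NNReal} {T : Finset (Sym2 ℕ)} {v : ℕ} {f : Sym2 ℕ}
    (hf : f ∈ T) (hv : v ∈ f) : c f v ≤ ell c T v := by
  classical
  exact Finset.le_sup (f := fun e => c e v) (Finset.mem_filter.mpr ⟨hf, hv⟩)

lemma zz_mcost_attained (E0 : Finset (Sym2 ℕ)) (c : Sym2 ℕ → ℕ → NNReal)
    (Vfin : Finset ℕ) {s t : ℕ} (P : (fromEdgeSet (↑E0 : Set (Sym2 ℕ))).Walk s t)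
    (d : ℕ × ℕ × NNReal × NNReal) (h : ChordOK E0 c P d) :
    ∃ Q : (fromEdgeSet (↑E0 : Set (Sym2 ℕ))).Walk d.1 d.2.1,
      IsAttach E0 P d.1 d.2.1 Q ∧ ell c Q.edges.toFinset d.1 = d.2.2.1 ∧
      ell c Q.edges.toFinset d.2.1 = d.2.2.2 ∧
      mcost E0 c Vfin P d = ∑ w ∈ Vfin \ {d.1, d.2.1}, ell c Q.edges.toFinset w := by
  classical
  set S : Set NNReal := {a | ∃ Q : (fromEdgeSet (↑E0 : Set (Sym2 ℕ))).Walk d.1 d.2.1,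
    IsAttach E0 P d.1 d.2.1 Q ∧
    ell c Q.edges.toFinset d.1 = d.2.2.1 ∧ ell c Q.edges.toFinset d.2.1 = d.2.2.2 ∧
    a = ∑ w ∈ Vfin \ {d.1, d.2.1}, ell c Q.edges.toFinset w} with hS
  have hne : S.Nonempty := by
    obtain ⟨Q, hA, h1, h2⟩ := h
    exact ⟨_, Q, hA, h1, h2, rfl⟩
  have hfin : S.Finite := by
    apply Set.Finite.subset
      ((E0.powerset.finite_toSet).image
        (fun T => ∑ w ∈ Vfin \ {d.1, d.2.1}, ell c T w))
    rintro a ⟨Q, hA, h1, h2, ha⟩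
    refine ⟨Q.edges.toFinset, ?_, ha.symm⟩
    rw [Finset.mem_coe, Finset.mem_powerset]
    intro f hf
    rw [List.mem_toFinset] at hf
    have := Q.edges_subset_edgeSet hf
    rw [edgeSet_fromEdgeSet] at this
    exact Finset.mem_coe.mp this.1
  have hmem : sInf S ∈ S := hne.csInf_mem hfin
  obtain ⟨Q, hA, h1, h2, heq⟩ := hmem
  exact ⟨Q, hA, h1, h2, heq⟩

lemma zz_expand (E0 : Finset (Sym2 ℕ)) {s t : ℕ}
    (P : (fromEdgeSet (↑E0 : Set (Sym2 ℕ))).Walk s t)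
    (D : Finset (ℕ × ℕ × NNReal × NNReal)) (F EF : Finset (Sym2 ℕ))
    (hFEF : F ⊆ EF) (hPEF : ∀ f ∈ P.edges, f ∈ EF)
    (hQe : ∀ d ∈ D, ∃ Q : (fromEdgeSet (↑E0 : Set (Sym2 ℕ))).Walk d.1 d.2.1,
      IsAttach E0 P d.1 d.2.1 Q ∧ ∀ f ∈ Q.edges, f ∈ F)
    (u z : ℕ)
    (Wh : (fromEdgeSet ({e | e ∈ P.edges} ∪
      {e | ∃ d ∈ D, e = s(d.1, d.2.1)})).Walk u z) :
    ∃ W : (zzG EF).Walk u z, ∀ r ∈ W.support, r ∈ Wh.support ∨ r ∉ P.support := by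
  induction Wh with
  | nil => exact ⟨Walk.nil, by simp⟩
  | @cons u u' z hadj Wh' ih =>
    obtain ⟨W', hW'⟩ := ih
    rw [fromEdgeSet_adj] at hadj
    obtain ⟨hmem, hne⟩ := hadj
    rw [Set.mem_union] at hmem
    rcases hmem with hPe | hch
    · -- a P-edge
      have hadj2 : (zzG EF).Adj u u' := by
        rw [fromEdgeSet_adj]
        exact ⟨Finset.mem_coe.mpr (hPEF _ hPe), hne⟩
      refine ⟨Walk.cons hadj2 W', ?_⟩
      intro r hr
      rw [Walk.support_cons, List.mem_cons] at hr
      rcases hr with rfl | hr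
      · exact Or.inl (Walk.start_mem_support _)
      · rcases hW' r hr with h | h
        · exact Or.inl (by rw [Walk.support_cons]; exact List.mem_cons_of_mem _ h)
        · exact Or.inr h
    · obtain ⟨d, hd, hsd⟩ := hch
      obtain ⟨Q, hA, hQF⟩ := hQe d hd
      have hedges : ∀ f ∈ Q.edges, f ∈ (zzG EF).edgeSet := by
        intro f hf
        have h1 := Q.edges_subset_edgeSet hf
        rw [edgeSet_fromEdgeSet] at h1 ⊢
        exact ⟨Finset.mem_coe.mpr (hFEF (hQF f hf)), h1.2⟩
      have hsupQ : ∀ r ∈ Q.support, r = d.1 ∨ r = d.2.1 ∨ r ∉ P.support := by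
        intro r hr
        by_cases h1 : r = d.1
        · exact Or.inl h1
        by_cases h2 : r = d.2.1
        · exact Or.inr (Or.inl h2)
        exact Or.inr (Or.inr (hA.2.2.2 r hr h1 h2))
      rcases Sym2.eq_iff.mp hsd with ⟨h1, h2⟩ | ⟨h1, h2⟩
      · subst h1; subst h2
        refine ⟨(Q.transfer _ hedges).append W', ?_⟩
        intro r hr
        rw [Walk.mem_support_append_iff] at hr
        rcases hr with hr | hr
        · rw [Walk.support_transfer] at hr
          rcases hsupQ r hr with rfl | rfl | h
          · exact Or.inl (Walk.start_mem_support _)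
          · exact Or.inl (by
              rw [Walk.support_cons]
              exact List.mem_cons_of_mem _ (Walk.start_mem_support _))
          · exact Or.inr h
        · rcases hW' r hr with h | h
          · exact Or.inl (by rw [Walk.support_cons]; exact List.mem_cons_of_mem _ h)
          · exact Or.inr h
      · subst h1; subst h2
        refine ⟨((Q.transfer _ hedges).reverse).append W', ?_⟩
        intro r hr
        rw [Walk.mem_support_append_iff] at hr
        rcases hr with hr | hr
        · rw [Walk.support_reverse, List.mem_reverse, Walk.support_transfer] at hr
          rcases hsupQ r hr with rfl | rfl | h
          · exact Or.inl (by
              rw [Walk.support_cons]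
              exact List.mem_cons_of_mem _ (Walk.start_mem_support _))
          · exact Or.inl (Walk.start_mem_support _)
          · exact Or.inr h
        · rcases hW' r hr with h | h
          · exact Or.inl (by rw [Walk.support_cons]; exact List.mem_cons_of_mem _ h)
          · exact Or.inr h

theorem zz_dir2 (E0 : Finset (Sym2 ℕ)) (c : Sym2 ℕ → ℕ → NNReal)
    (Vfin : Finset ℕ) (s t : ℕ) (hst : s ≠ t)
    (P : (fromEdgeSet (↑E0 : Set (Sym2 ℕ))).Walk s t)
    (D : Finset (ℕ × ℕ × NNReal × NNReal)) (hD : Feas2 E0 c P D) :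
    ∃ F, Feas1 E0 P F ∧ Cost1 c Vfin F ≤ Cost2 E0 c Vfin P D := by
  classical
  obtain ⟨hOK, hTD⟩ := hD
  have hQall : ∀ d ∈ D, ∃ Q : (fromEdgeSet (↑E0 : Set (Sym2 ℕ))).Walk d.1 d.2.1,
      IsAttach E0 P d.1 d.2.1 Q ∧ ell c Q.edges.toFinset d.1 = d.2.2.1 ∧
      ell c Q.edges.toFinset d.2.1 = d.2.2.2 ∧
      mcost E0 c Vfin P d = ∑ w ∈ Vfin \ {d.1, d.2.1}, ell c Q.edges.toFinset w :=
    fun d hd => zz_mcost_attained E0 c Vfin P d (hOK d hd)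
  choose Qf hA hE1 hE2 hM using hQall
  set F : Finset (Sym2 ℕ) :=
    D.attach.biUnion (fun x => (Qf x.1 x.2).edges.toFinset) with hFdef
  have hFE0 : F ⊆ E0 := by
    intro f hf
    rw [hFdef, Finset.mem_biUnion] at hf
    obtain ⟨x, _, hfx⟩ := hf
    rw [List.mem_toFinset] at hfx
    have := (Qf x.1 x.2).edges_subset_edgeSet hfx
    rw [edgeSet_fromEdgeSet] at this
    exact Finset.mem_coe.mp this.1
  have hFmem : ∀ (d : ℕ × ℕ × NNReal × NNReal) (hd : d ∈ D),
      ∀ f ∈ (Qf d hd).edges, f ∈ F := by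
    intro d hd f hf
    rw [hFdef, Finset.mem_biUnion]
    exact ⟨⟨d, hd⟩, Finset.mem_attach _ _, List.mem_toFinset.mpr hf⟩
  set EF : Finset (Sym2 ℕ) := F ∪ P.edges.toFinset with hEFdef
  have hPEF : ∀ f ∈ P.edges, f ∈ EF := by
    intro f hf
    rw [hEFdef, Finset.mem_union, List.mem_toFinset]
    exact Or.inr hf
  have hPedges : ∀ f ∈ P.edges, f ∈ (zzG EF).edgeSet := by
    intro f hf
    have := P.edges_subset_edgeSet hf
    rw [edgeSet_fromEdgeSet] at this ⊢
    exact ⟨Finset.mem_coe.mpr (hPEF f hf), this.2⟩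
  set PE := P.transfer (zzG EF) hPedges with hPE
  have hPEs : PE.support = P.support := Walk.support_transfer _ _
  have hQe : ∀ d ∈ D, ∃ Q : (fromEdgeSet (↑E0 : Set (Sym2 ℕ))).Walk d.1 d.2.1,
      IsAttach E0 P d.1 d.2.1 Q ∧ ∀ f ∈ Q.edges, f ∈ F :=
    fun d hd => ⟨Qf d hd, hA d hd, hFmem d hd⟩
  -- feasibility
  have h2DP : TwoDisjointPaths (zzG EF) s t := by
    apply zz_mengerST EF s t hst PE
    intro w hws hwt
    by_cases hwP : w ∈ P.support
    · obtain ⟨ph, qh, hph, hqh, hdisj⟩ := hTD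
      have hwone : w ∉ ph.support ∨ w ∉ qh.support := by
        by_contra hc
        push_neg at hc
        rcases hdisj w hc.1 hc.2 with h | h
        · exact hws h
        · exact hwt h
      rcases hwone with h | h
      · obtain ⟨W, hW⟩ := zz_expand E0 P D F EF Finset.subset_union_left hPEF hQe s t ph
        refine ⟨W, fun hc => ?_⟩
        rcases hW w hc with h2 | h2
        · exact h h2
        · exact h2 hwP
      · obtain ⟨W, hW⟩ := zz_expand E0 P D F EF Finset.subset_union_left hPEF hQe s t qh
        refine ⟨W, fun hc => ?_⟩
        rcases hW w hc with h2 | h2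
        · exact h h2
        · exact h2 hwP
    · exact ⟨PE, fun hc => hwP (hPEs ▸ hc)⟩
  have hgeq : fromEdgeSet ((↑F : Set (Sym2 ℕ)) ∪ {e | e ∈ P.edges}) = zzG EF := by
    congr 1
    ext f
    rw [hEFdef]
    simp [List.mem_toFinset]
  refine ⟨F, ⟨hFE0, ?_⟩, ?_⟩
  · rw [hgeq]; exact h2DP
  -- cost bound
  · unfold Cost1 Cost2
    haveI : DecidablePred (fun v : ℕ => v ∈ P.support) :=
      Classical.decPred _
    rw [← Finset.sum_filter_add_sum_filter_not Vfin (fun v => v ∈ P.support)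
      (fun v => ell c F v)]
    apply add_le_add
    · -- on-path vertices
      refine le_trans ?_ (Finset.sum_le_sum_of_subset (Finset.filter_subset (fun v : ℕ => v ∈ P.support) Vfin))
      apply Finset.sum_le_sum
      intro v hv
      rw [Finset.mem_filter] at hv
      apply zz_ell_le
      intro f hf hvf
      rw [hFdef, Finset.mem_biUnion] at hf
      obtain ⟨x, _, hfx⟩ := hf
      rw [List.mem_toFinset] at hfx
      have hvsup : v ∈ (Qf x.1 x.2).support :=
        zz_mem_support_of_mem_edges _ hfx hvf
      have hvP : v ∈ P.support := hv.2
      have hvend : v = x.1.1 ∨ v = x.1.2.1 := by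
        by_contra hc
        push_neg at hc
        exact ((hA x.1 x.2).2.2.2 v hvsup hc.1 hc.2) hvP
      have hle1 : c f v ≤ ell c (Qf x.1 x.2).edges.toFinset v :=
        zz_le_ell (List.mem_toFinset.mpr hfx) hvf
      have hmemfil : x.1 ∈ D.filter (fun d => d.1 = v ∨ d.2.1 = v) := by
        rw [Finset.mem_filter]
        refine ⟨x.2, ?_⟩
        rcases hvend with h | h
        · exact Or.inl h.symm
        · exact Or.inr h.symm
      refine le_trans hle1 (le_trans ?_ (Finset.le_sup
        (f := fun d => if d.1 = v then d.2.2.1 else d.2.2.2) hmemfil))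
      by_cases hcase : x.1.1 = v
      · rw [if_pos hcase, ← hE1 x.1 x.2]
        exact le_of_eq (congrArg (ell c (Qf x.1 x.2).edges.toFinset) hcase.symm)
      · rw [if_neg hcase]
        have hv2 : x.1.2.1 = v := by
          rcases hvend with h | h
          · exact absurd h.symm hcase
          · exact h.symm
        rw [← hE2 x.1 x.2]
        exact le_of_eq (congrArg (ell c (Qf x.1 x.2).edges.toFinset) hv2.symm)
    · -- off-path vertices
      have step1 : ∀ v, ell c F v ≤
          ∑ x ∈ D.attach, ell c (Qf x.1 x.2).edges.toFinset v := by
        intro v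
        apply zz_ell_le
        intro f hf hvf
        rw [hFdef, Finset.mem_biUnion] at hf
        obtain ⟨x, hx, hfx⟩ := hf
        rw [List.mem_toFinset] at hfx
        refine le_trans (zz_le_ell (List.mem_toFinset.mpr hfx) hvf) ?_
        exact Finset.single_le_sum (f := fun x => ell c (Qf x.1 x.2).edges.toFinset v)
          (fun _ _ => zero_le) hx
      refine le_trans (Finset.sum_le_sum fun v _ => step1 v) ?_
      rw [Finset.sum_comm]
      rw [← Finset.sum_attach D (fun d => mcost E0 c Vfin P d)]
      apply Finset.sum_le_sum
      intro x _
      rw [hM x.1 x.2]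
      apply Finset.sum_le_sum_of_subset
      intro v hv
      rw [Finset.mem_filter] at hv
      rw [Finset.mem_sdiff]
      refine ⟨hv.1, ?_⟩
      intro hc
      simp only [Finset.mem_insert, Finset.mem_singleton] at hc
      rcases hc with rfl | rfl
      · exact hv.2 (hA x.1 x.2).2.1
      · exact hv.2 (hA x.1 x.2).2.2.1

lemma zz_firstSplit {G : SimpleGraph ℕ} : ∀ {b z : ℕ} (W : G.Walk b z), W.IsPath →
    ∀ (T : Set ℕ), z ∈ T →
    ∃ cv ∈ T, ∃ (r : G.Walk b cv) (W2 : G.Walk cv z),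
      r.IsPath ∧ W2.IsPath ∧ (∀ u ∈ r.support, u ∈ T → u = cv) ∧
      (∀ u, u ∈ r.support → u ∈ W2.support → u = cv) ∧
      (∀ f ∈ r.edges, f ∈ W.edges) ∧ (∀ f ∈ W2.edges, f ∈ W.edges) ∧
      (∀ u ∈ r.support, u ∈ W.support) ∧ (∀ u ∈ W2.support, u ∈ W.support) ∧
      W2.length ≤ W.length := by
  intro b z W
  induction W with
  | nil =>
    intro hW T hz
    exact ⟨_, hz, Walk.nil, Walk.nil, by simp, by simp, by simp, by simp, by simp,
      by simp, by simp, by simp, le_refl _⟩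
  | @cons b b₂ z hadj W₁ ih =>
    intro hW T hz
    by_cases hbT : b ∈ T
    · refine ⟨b, hbT, Walk.nil, Walk.cons hadj W₁, by simp, hW, by simp, ?_, by simp,
        fun f hf => hf, ?_, fun u hu => hu, le_refl _⟩
      · intro u hu _
        simp only [Walk.support_nil, List.mem_singleton] at hu
        exact hu
      · intro u hu
        simp only [Walk.support_nil, List.mem_singleton] at hu
        rw [hu, Walk.support_cons]
        exact List.mem_cons_self
    · obtain ⟨hW₁, hbW₁⟩ := (Walk.cons_isPath_iff hadj W₁).mp hW
      obtain ⟨cv, hcv, r', W2, h1, h2, h3, h4, h5, h6, h7, h8, h9⟩ := ih hW₁ T hz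
      refine ⟨cv, hcv, Walk.cons hadj r', W2, ?_, h2, ?_, ?_, ?_, ?_, ?_, ?_, ?_⟩
      · rw [Walk.cons_isPath_iff]
        exact ⟨h1, fun hc => hbW₁ (h7 b hc)⟩
      · intro u hu huT
        rw [Walk.support_cons, List.mem_cons] at hu
        rcases hu with rfl | hu
        · exact absurd huT hbT
        · exact h3 u hu huT
      · intro u hu hu2
        rw [Walk.support_cons, List.mem_cons] at hu
        rcases hu with rfl | hu
        · exact absurd (h8 u hu2) hbW₁
        · exact h4 u hu hu2
      · intro f hf
        rw [Walk.edges_cons, List.mem_cons] at hf ⊢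
        rcases hf with rfl | hf
        · exact Or.inl rfl
        · exact Or.inr (h5 f hf)
      · intro f hf
        rw [Walk.edges_cons]
        exact List.mem_cons_of_mem _ (h6 f hf)
      · intro u hu
        rw [Walk.support_cons, List.mem_cons] at hu ⊢
        rcases hu with rfl | hu
        · exact Or.inl rfl
        · exact Or.inr (h7 u hu)
      · intro u hu
        rw [Walk.support_cons]
        exact List.mem_cons_of_mem _ (h8 u hu)
      · rw [Walk.length_cons]
        omega

abbrev zzCW (E0 : Finset (Sym2 ℕ)) : Type :=
  Σ' (u : ℕ) (v : ℕ), (fromEdgeSet (↑E0 : Set (Sym2 ℕ))).Walk u v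

noncomputable def zzChord (c : Sym2 ℕ → ℕ → NNReal) {E0 : Finset (Sym2 ℕ)}
    (x : zzCW E0) : ℕ × ℕ × NNReal × NNReal :=
  (x.1, x.2.1, ell c x.2.2.edges.toFinset x.1, ell c x.2.2.edges.toFinset x.2.1)

abbrev zzChG {E0 : Finset (Sym2 ℕ)} {s t : ℕ}
    (P : (fromEdgeSet (↑E0 : Set (Sym2 ℕ))).Walk s t)
    (D : Finset (ℕ × ℕ × NNReal × NNReal)) : SimpleGraph ℕ :=
  fromEdgeSet ({e | e ∈ P.edges} ∪ {e | ∃ d ∈ D, e = s(d.1, d.2.1)})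

lemma zz_chg_mono {E0 : Finset (Sym2 ℕ)} {s t : ℕ}
    {P : (fromEdgeSet (↑E0 : Set (Sym2 ℕ))).Walk s t}
    {D D' : Finset (ℕ × ℕ × NNReal × NNReal)} (h : D ⊆ D') :
    zzChG P D ≤ zzChG P D' := by
  apply fromEdgeSet_mono
  apply Set.union_subset_union_right
  rintro f ⟨d, hd, rfl⟩
  exact ⟨d, h hd, rfl⟩

lemma zz_GpE0 {E0 F : Finset (Sym2 ℕ)} {s t : ℕ}
    {P : (fromEdgeSet (↑E0 : Set (Sym2 ℕ))).Walk s t} (hFE0 : F ⊆ E0) :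
    ∀ f ∈ (fromEdgeSet ((↑F : Set (Sym2 ℕ)) ∪ {e | e ∈ P.edges})).edgeSet,
      f ∈ (fromEdgeSet (↑E0 : Set (Sym2 ℕ))).edgeSet := by
  intro f hf
  rw [edgeSet_fromEdgeSet] at hf ⊢
  refine ⟨?_, hf.2⟩
  rcases hf.1 with h | h
  · exact Finset.mem_coe.mpr (hFE0 (Finset.mem_coe.mp h))
  · have := P.edges_subset_edgeSet h
    rw [edgeSet_fromEdgeSet] at this
    exact this.1

lemma zz_decomp (E0 : Finset (Sym2 ℕ)) (c : Sym2 ℕ → ℕ → NNReal) {s t : ℕ}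
    (P : (fromEdgeSet (↑E0 : Set (Sym2 ℕ))).Walk s t)
    (F : Finset (Sym2 ℕ)) (hFE0 : F ⊆ E0) :
    ∀ (n : ℕ) (u z : ℕ)
      (W : (fromEdgeSet ((↑F : Set (Sym2 ℕ)) ∪ {e | e ∈ P.edges})).Walk u z),
      W.length ≤ n → W.IsPath → u ∈ P.support → z ∈ P.support →
      ∃ L : List (zzCW E0),
        (∀ x ∈ L, IsAttach E0 P x.1 x.2.1 x.2.2 ∧ ∀ f ∈ x.2.2.edges, f ∈ W.edges) ∧
        List.Pairwise
          (fun x y => ∀ r, r ∈ x.2.2.support → r ∈ y.2.2.support → r ∈ P.support) L ∧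
        ∃ Wh : (zzChG P ((L.map (zzChord c)).toFinset)).Walk u z,
          Wh.IsPath ∧ ∀ r ∈ Wh.support, r ∈ W.support := by
  intro n
  induction n with
  | zero =>
    intro u z W hlen hWp hu hz
    cases W with
    | nil =>
      exact ⟨[], by simp, by simp, Walk.nil, by simp, by simp⟩
    | cons hadj W₁ =>
      rw [Walk.length_cons] at hlen
      omega
  | succ n ih =>
    intro u z W hlen hWp hu hz
    cases W with
    | nil =>
      exact ⟨[], by simp, by simp, Walk.nil, by simp, by simp⟩
    | @cons _ b _ hadj W₁ =>
      rw [Walk.length_cons] at hlen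
      obtain ⟨hW₁p, huW₁⟩ := (Walk.cons_isPath_iff hadj W₁).mp hWp
      have hub : u ≠ b := hadj.ne
      have hedge : s(u, b) ∈ ((↑F : Set (Sym2 ℕ)) ∪ {e | e ∈ P.edges}) ∧ u ≠ b := by
        rw [← fromEdgeSet_adj]; exact hadj
      by_cases hb : b ∈ P.support
      · obtain ⟨L₂, hL₂props, hL₂pair, Wh₂, hWh₂p, hWh₂s⟩ :=
          ih b z W₁ (by omega) hW₁p hb hz
        by_cases hPe : s(u, b) ∈ P.edges
        · -- a P-edge step
          have hadjCh : (zzChG P ((L₂.map (zzChord c)).toFinset)).Adj u b := by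
            rw [fromEdgeSet_adj]
            exact ⟨Or.inl hPe, hub⟩
          refine ⟨L₂, ?_, hL₂pair, Walk.cons hadjCh Wh₂, ?_, ?_⟩
          · intro x hx
            refine ⟨(hL₂props x hx).1, fun f hf => ?_⟩
            rw [Walk.edges_cons]
            exact List.mem_cons_of_mem _ ((hL₂props x hx).2 f hf)
          · rw [Walk.cons_isPath_iff]
            exact ⟨hWh₂p, fun hc => huW₁ (hWh₂s u hc)⟩
          · intro r hr
            rw [Walk.support_cons, List.mem_cons] at hr ⊢
            rcases hr with rfl | hr
            · exact Or.inl rfl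
            · exact Or.inr (hWh₂s r hr)
        · -- an F-edge with both ends on P : a one-edge chord
          have hFe : s(u, b) ∈ F := by
            rcases hedge.1 with h | h
            · exact Finset.mem_coe.mp h
            · exact absurd h hPe
          have hadjE0 : (fromEdgeSet (↑E0 : Set (Sym2 ℕ))).Adj u b := by
            rw [fromEdgeSet_adj]
            exact ⟨Finset.mem_coe.mpr (hFE0 hFe), hub⟩
          set Q : (fromEdgeSet (↑E0 : Set (Sym2 ℕ))).Walk u b :=
            Walk.cons hadjE0 Walk.nil with hQdef
          have hQsup : Q.support = [u, b] := by rw [hQdef]; simp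
          have hAtt : IsAttach E0 P u b Q := by
            refine ⟨?_, hu, hb, ?_⟩
            · rw [Walk.isPath_def, hQsup]; simp [hub]
            · intro w hw hw1 hw2
              rw [hQsup] at hw
              simp only [List.mem_cons, List.not_mem_nil, or_false] at hw
              rcases hw with rfl | rfl
              · exact absurd rfl hw1
              · exact absurd rfl hw2
          set x₀ : zzCW E0 := ⟨u, b, Q⟩ with hx₀
          have hsub : ((L₂.map (zzChord c)).toFinset : Finset _) ⊆
              (((x₀ :: L₂).map (zzChord c)).toFinset) := by
            intro d hd
            rw [List.mem_toFinset] at hd ⊢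
            rw [List.map_cons]
            exact List.mem_cons_of_mem _ hd
          have hadjCh : (zzChG P (((x₀ :: L₂).map (zzChord c)).toFinset)).Adj u b := by
            rw [fromEdgeSet_adj]
            refine ⟨Or.inr ⟨zzChord c x₀, ?_, rfl⟩, hub⟩
            rw [List.mem_toFinset, List.map_cons]
            exact List.mem_cons_self
          refine ⟨x₀ :: L₂, ?_, ?_, Walk.cons hadjCh
            (Wh₂.transfer _ (zz_lift_edges (zz_chg_mono hsub) Wh₂)), ?_, ?_⟩
          · intro x hx
            rcases List.mem_cons.mp hx with rfl | hx
            · refine ⟨hAtt, fun f hf => ?_⟩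
              have hf' : f ∈ Q.edges := hf
              rw [hQdef] at hf'
              simp only [Walk.edges_cons, Walk.edges_nil, List.mem_singleton] at hf'
              rw [hf', Walk.edges_cons]
              exact List.mem_cons_self
            · refine ⟨(hL₂props x hx).1, fun f hf => ?_⟩
              rw [Walk.edges_cons]
              exact List.mem_cons_of_mem _ ((hL₂props x hx).2 f hf)
          · refine List.Pairwise.cons ?_ hL₂pair
            intro y hy r hr hry
            rw [hQsup] at hr
            simp only [List.mem_cons, List.not_mem_nil, or_false] at hr
            rcases hr with rfl | rfl
            · exact hu
            · exact hb
          · rw [Walk.cons_isPath_iff, Walk.support_transfer]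
            exact ⟨hWh₂p.transfer _, fun hc => huW₁ (hWh₂s u hc)⟩
          · intro r hr
            rw [Walk.support_cons, List.mem_cons, Walk.support_transfer] at hr
            rw [Walk.support_cons, List.mem_cons]
            rcases hr with rfl | hr
            · exact Or.inl rfl
            · exact Or.inr (hWh₂s r hr)
      · -- b is off the path : extract an attachment path
        obtain ⟨cv, hcv, r, W₂, hrp, hW₂p, hronly, hrW₂, hredg, hW₂edg, hrsup, hW₂sup,
          hW₂len⟩ := zz_firstSplit W₁ hW₁p {w | w ∈ P.support} hz
        obtain ⟨L₂, hL₂props, hL₂pair, Wh₂, hWh₂p, hWh₂s⟩ :=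
          ih cv z W₂ (by omega) hW₂p hcv hz
        have hredg0 : ∀ f ∈ r.edges, f ∈ (fromEdgeSet (↑E0 : Set (Sym2 ℕ))).edgeSet :=
          fun f hf => zz_GpE0 hFE0 f (W₁.edges_subset_edgeSet (hredg f hf))
        have hadjE0 : (fromEdgeSet (↑E0 : Set (Sym2 ℕ))).Adj u b := by
          rw [← SimpleGraph.mem_edgeSet]
          exact zz_GpE0 hFE0 _ ((SimpleGraph.mem_edgeSet _).mpr hadj)
        set rE := r.transfer (fromEdgeSet (↑E0 : Set (Sym2 ℕ))) hredg0 with hrE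
        have hrEs : rE.support = r.support := Walk.support_transfer _ _
        have hrEe : rE.edges = r.edges := Walk.edges_transfer _ _
        set Q : (fromEdgeSet (↑E0 : Set (Sym2 ℕ))).Walk u cv :=
          Walk.cons hadjE0 rE with hQdef
        have hucv : u ≠ cv := by
          intro hc
          exact huW₁ (hc ▸ hrsup cv r.end_mem_support)
        have hQsup : Q.support = u :: r.support := by
          rw [hQdef, Walk.support_cons, hrEs]
        have hAtt : IsAttach E0 P u cv Q := by
          refine ⟨?_, hu, hcv, ?_⟩
          · rw [Walk.cons_isPath_iff]
            refine ⟨hrp.transfer _, fun hc => ?_⟩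
            rw [hrEs] at hc
            exact huW₁ (hrsup u hc)
          · intro w hw hw1 hw2
            rw [hQsup] at hw
            rcases List.mem_cons.mp hw with rfl | hw
            · exact absurd rfl hw1
            · intro hwP
              exact hw2 (hronly w hw hwP)
        set x₀ : zzCW E0 := ⟨u, cv, Q⟩ with hx₀
        have hsub : ((L₂.map (zzChord c)).toFinset : Finset _) ⊆
            (((x₀ :: L₂).map (zzChord c)).toFinset) := by
          intro d hd
          rw [List.mem_toFinset] at hd ⊢
          rw [List.map_cons]
          exact List.mem_cons_of_mem _ hd
        have hadjCh : (zzChG P (((x₀ :: L₂).map (zzChord c)).toFinset)).Adj u cv := by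
          rw [fromEdgeSet_adj]
          refine ⟨Or.inr ⟨zzChord c x₀, ?_, rfl⟩, hucv⟩
          rw [List.mem_toFinset, List.map_cons]
          exact List.mem_cons_self
        refine ⟨x₀ :: L₂, ?_, ?_, Walk.cons hadjCh
          (Wh₂.transfer _ (zz_lift_edges (zz_chg_mono hsub) Wh₂)), ?_, ?_⟩
        · intro x hx
          rcases List.mem_cons.mp hx with rfl | hx
          · refine ⟨hAtt, fun f hf => ?_⟩
            have hf' : f ∈ Q.edges := hf
            rw [hQdef, Walk.edges_cons, hrEe] at hf'
            rw [Walk.edges_cons]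
            rcases List.mem_cons.mp hf' with rfl | hf'
            · exact List.mem_cons_self
            · exact List.mem_cons_of_mem _ (hredg f hf')
          · refine ⟨(hL₂props x hx).1, fun f hf => ?_⟩
            rw [Walk.edges_cons]
            exact List.mem_cons_of_mem _ (hW₂edg f ((hL₂props x hx).2 f hf))
        · refine List.Pairwise.cons ?_ hL₂pair
          intro y hy ρ hρ hρy
          by_contra hρP
          rw [hQsup] at hρ
          have hρr : ρ ∈ r.support := by
            rcases List.mem_cons.mp hρ with rfl | h
            · exact absurd hu hρP
            · exact h
          have hρW₂ : ρ ∈ W₂.support := by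
            rcases zz_support_char y.2.2 ρ hρy with h | ⟨f, hf, hρf⟩
            · exact absurd (h ▸ ((hL₂props y hy).1.2.1)) hρP
            · exact zz_mem_support_of_mem_edges W₂ ((hL₂props y hy).2 f hf) hρf
          exact hρP (hrW₂ ρ hρr hρW₂ ▸ hcv)
        · rw [Walk.cons_isPath_iff, Walk.support_transfer]
          refine ⟨hWh₂p.transfer _, fun hc => ?_⟩
          exact huW₁ (hW₂sup u (hWh₂s u hc))
        · intro ρ hρ
          rw [Walk.support_cons, List.mem_cons, Walk.support_transfer] at hρ
          rw [Walk.support_cons, List.mem_cons]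
          rcases hρ with rfl | hρ
          · exact Or.inl rfl
          · exact Or.inr (hW₂sup ρ (hWh₂s ρ hρ))

lemma zz_ell_zero {c : Sym2 ℕ → ℕ → NNReal} {T : Finset (Sym2 ℕ)} {v : ℕ}
    (h : ∀ f ∈ T, v ∉ f) : ell c T v = 0 := by
  classical
  refine le_antisymm (Finset.sup_le fun f hf => ?_) zero_le
  rw [Finset.mem_filter] at hf
  exact absurd hf.2 (h f hf.1)

theorem zz_dir1 (E0 : Finset (Sym2 ℕ)) (c : Sym2 ℕ → ℕ → NNReal)
    (Vfin : Finset ℕ) (s t : ℕ)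
    (P : (fromEdgeSet (↑E0 : Set (Sym2 ℕ))).Walk s t)
    (hPzero : ∀ e ∈ P.edges, ∀ v, c e v = 0)
    (F : Finset (Sym2 ℕ)) (hFeas : Feas1 E0 P F) :
    ∃ D, Feas2 E0 c P D ∧ Cost2 E0 c Vfin P D ≤ Cost1 c Vfin F := by
  classical
  obtain ⟨hFE0, htdp⟩ := hFeas
  obtain ⟨p, q, hp, hq, hdisj⟩ := htdp
  obtain ⟨Lp, hLpprops, hLppair, Whp, hWhpP, hWhpS⟩ :=
    zz_decomp E0 c P F hFE0 p.length s t p le_rfl hp P.start_mem_support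
      P.end_mem_support
  obtain ⟨Lq, hLqprops, hLqpair, Whq, hWhqP, hWhqS⟩ :=
    zz_decomp E0 c P F hFE0 q.length s t q le_rfl hq P.start_mem_support
      P.end_mem_support
  set L : List (zzCW E0) := Lp ++ Lq with hLdef
  set D : Finset (ℕ × ℕ × NNReal × NNReal) := (L.map (zzChord c)).toFinset with hDdef
  have hsubp : ((Lp.map (zzChord c)).toFinset : Finset _) ⊆ D := by
    intro d hd
    rw [hDdef, List.mem_toFinset, hLdef, List.map_append, List.mem_append]
    rw [List.mem_toFinset] at hd
    exact Or.inl hd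
  have hsubq : ((Lq.map (zzChord c)).toFinset : Finset _) ⊆ D := by
    intro d hd
    rw [hDdef, List.mem_toFinset, hLdef, List.map_append, List.mem_append]
    rw [List.mem_toFinset] at hd
    exact Or.inr hd
  -- facts about entries of L
  have hLAtt : ∀ x ∈ L, IsAttach E0 P x.1 x.2.1 x.2.2 := by
    intro x hx
    rw [hLdef, List.mem_append] at hx
    rcases hx with hx | hx
    · exact (hLpprops x hx).1
    · exact (hLqprops x hx).1
  have hLedge : ∀ x ∈ L, ∀ f ∈ x.2.2.edges, f ∈ F ∨ f ∈ P.edges := by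
    intro x hx f hf
    rw [hLdef, List.mem_append] at hx
    have hfG : f ∈ (fromEdgeSet ((↑F : Set (Sym2 ℕ)) ∪ {e | e ∈ P.edges})).edgeSet := by
      rcases hx with hx | hx
      · exact p.edges_subset_edgeSet ((hLpprops x hx).2 f hf)
      · exact q.edges_subset_edgeSet ((hLqprops x hx).2 f hf)
    rw [edgeSet_fromEdgeSet] at hfG
    rcases hfG.1 with h | h
    · exact Or.inl (Finset.mem_coe.mp h)
    · exact Or.inr h
  have hQle : ∀ x ∈ L, ∀ v : ℕ, ell c x.2.2.edges.toFinset v ≤ ell c F v := by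
    intro x hx v
    apply zz_ell_le
    intro f hf hvf
    rw [List.mem_toFinset] at hf
    rcases hLedge x hx f hf with h | h
    · exact zz_le_ell h hvf
    · rw [hPzero f h v]; exact zero_le
  -- the pairwise property over the whole of L
  have hLpair : List.Pairwise
      (fun x y : zzCW E0 =>
        ∀ r, r ∈ x.2.2.support → r ∈ y.2.2.support → r ∈ P.support) L := by
    rw [hLdef, List.pairwise_append]
    refine ⟨hLppair, hLqpair, ?_⟩
    intro x hx y hy r hrx hry
    by_contra hrP
    have hrp : r ∈ p.support := by
      rcases zz_support_char x.2.2 r hrx with h | ⟨f, hf, hrf⟩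
      · exact absurd (h ▸ (hLpprops x hx).1.2.1) hrP
      · exact zz_mem_support_of_mem_edges p ((hLpprops x hx).2 f hf) hrf
    have hrq : r ∈ q.support := by
      rcases zz_support_char y.2.2 r hry with h | ⟨f, hf, hrf⟩
      · exact absurd (h ▸ (hLqprops y hy).1.2.1) hrP
      · exact zz_mem_support_of_mem_edges q ((hLqprops y hy).2 f hf) hrf
    rcases hdisj r hrp hrq with rfl | rfl
    · exact hrP P.start_mem_support
    · exact hrP P.end_mem_support
  refine ⟨D, ⟨?_, ?_⟩, ?_⟩
  · -- all chords are legitimate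
    intro d hd
    rw [hDdef, List.mem_toFinset, List.mem_map] at hd
    obtain ⟨x, hxL, rfl⟩ := hd
    exact ⟨x.2.2, hLAtt x hxL, rfl, rfl⟩
  · -- two disjoint paths in the contracted instance
    refine ⟨Whp.transfer _ (zz_lift_edges (zz_chg_mono hsubp) Whp),
      Whq.transfer _ (zz_lift_edges (zz_chg_mono hsubq) Whq),
      hWhpP.transfer _, hWhqP.transfer _, ?_⟩
    intro v hv1 hv2
    rw [Walk.support_transfer] at hv1 hv2
    exact hdisj v (hWhpS v hv1) (hWhqS v hv2)
  · -- cost comparison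
    unfold Cost1 Cost2
    haveI : DecidablePred (fun v : ℕ => v ∈ P.support) := Classical.decPred _
    rw [← Finset.sum_filter_add_sum_filter_not Vfin (fun v => v ∈ P.support)
      (fun v => ell c F v)]
    rw [← Finset.sum_filter_add_sum_filter_not Vfin (fun v => v ∈ P.support)
      (fun v => (D.filter (fun d => d.1 = v ∨ d.2.1 = v)).sup
        (fun d => if d.1 = v then d.2.2.1 else d.2.2.2))]
    have hA2 : (∑ v ∈ Vfin.filter (fun v => ¬ v ∈ P.support),
        (D.filter (fun d => d.1 = v ∨ d.2.1 = v)).sup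
          (fun d => if d.1 = v then d.2.2.1 else d.2.2.2)) = 0 := by
      apply Finset.sum_eq_zero
      intro v hv
      rw [Finset.mem_filter] at hv
      have hempty : D.filter (fun d => d.1 = v ∨ d.2.1 = v) = ∅ := by
        rw [Finset.filter_eq_empty_iff]
        intro d hd
        rw [hDdef, List.mem_toFinset, List.mem_map] at hd
        obtain ⟨x, hxL, rfl⟩ := hd
        rintro (h | h)
        · exact hv.2 (h ▸ (hLAtt x hxL).2.1)
        · exact hv.2 (h ▸ (hLAtt x hxL).2.2.1)
      rw [hempty, Finset.sup_empty]
      rfl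
    rw [hA2, add_zero]
    apply add_le_add
    · -- endpoint activation levels
      apply Finset.sum_le_sum
      intro v hv
      rw [Finset.mem_filter] at hv
      apply Finset.sup_le
      intro d hd
      rw [Finset.mem_filter] at hd
      obtain ⟨hdD, hor⟩ := hd
      rw [hDdef, List.mem_toFinset, List.mem_map] at hdD
      obtain ⟨x, hxL, rfl⟩ := hdD
      by_cases hcase : (zzChord c x).1 = v
      · rw [if_pos hcase]
        refine le_trans (le_of_eq ?_) (hQle x hxL v)
        show ell c x.2.2.edges.toFinset x.1 = ell c x.2.2.edges.toFinset v
        exact congrArg _ hcase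
      · rw [if_neg hcase]
        have hv2 : (zzChord c x).2.1 = v := by
          rcases hor with h | h
          · exact absurd h hcase
          · exact h
        refine le_trans (le_of_eq ?_) (hQle x hxL v)
        show ell c x.2.2.edges.toFinset x.2.1 = ell c x.2.2.edges.toFinset v
        exact congrArg _ hv2
    · -- middle costs
      rw [← Finset.sum_attach D (fun d => mcost E0 c Vfin P d)]
      have hwit : ∀ dx : {d // d ∈ D}, ∃ x, x ∈ L ∧ zzChord c x = dx.1 := by
        intro dx
        have h2 : dx.1 ∈ (List.map (zzChord c) L).toFinset := dx.2
        rw [List.mem_toFinset, List.mem_map] at h2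
        exact h2
      choose xf hxfL hxfeq using hwit
      have hstep : ∀ dx : {d // d ∈ D}, mcost E0 c Vfin P dx.1 ≤
          ∑ w ∈ Vfin.filter (fun w => ¬ w ∈ P.support),
            ell c (xf dx).2.2.edges.toFinset w := by
        intro dx
        have h1 : mcost E0 c Vfin P dx.1 ≤
            ∑ w ∈ Vfin \ {dx.1.1, dx.1.2.1}, ell c (xf dx).2.2.edges.toFinset w := by
          rw [← hxfeq dx]
          unfold mcost
          apply csInf_le (OrderBot.bddBelow _)
          exact ⟨(xf dx).2.2, hLAtt _ (hxfL dx), rfl, rfl, rfl⟩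
        refine le_trans h1 ?_
        rw [← Finset.sum_filter_add_sum_filter_not (Vfin \ {dx.1.1, dx.1.2.1})
          (fun w => ¬ w ∈ P.support)
          (fun w => ell c (xf dx).2.2.edges.toFinset w)]
        have hzero : (∑ w ∈ (Vfin \ {dx.1.1, dx.1.2.1}).filter
            (fun w => ¬ ¬ w ∈ P.support), ell c (xf dx).2.2.edges.toFinset w) = 0 := by
          apply Finset.sum_eq_zero
          intro w hw
          rw [Finset.mem_filter, not_not] at hw
          obtain ⟨hw1, hwP⟩ := hw
          rw [Finset.mem_sdiff] at hw1
          apply zz_ell_zero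
          intro f hf hwf
          rw [List.mem_toFinset] at hf
          have hwsup : w ∈ (xf dx).2.2.support :=
            zz_mem_support_of_mem_edges _ hf hwf
          have hAx := hLAtt _ (hxfL dx)
          have hne1 : w ≠ (xf dx).1 := by
            intro hc
            apply hw1.2
            simp only [Finset.mem_insert, Finset.mem_singleton]
            left
            rw [← hxfeq dx, hc]
            rfl
          have hne2 : w ≠ (xf dx).2.1 := by
            intro hc
            apply hw1.2
            simp only [Finset.mem_insert, Finset.mem_singleton]
            right
            rw [← hxfeq dx, hc]
            rfl
          exact (hAx.2.2.2 w hwsup hne1 hne2) hwP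
        rw [hzero, add_zero]
        apply Finset.sum_le_sum_of_subset
        intro w hw
        rw [Finset.mem_filter] at hw ⊢
        rw [Finset.mem_sdiff] at hw
        exact ⟨hw.1.1, hw.2⟩
      refine le_trans (Finset.sum_le_sum fun dx _ => hstep dx) ?_
      rw [Finset.sum_comm]
      apply Finset.sum_le_sum
      intro w hw
      rw [Finset.mem_filter] at hw
      have huniq : ∀ dx1 dx2 : {d // d ∈ D}, w ∈ (xf dx1).2.2.support →
          w ∈ (xf dx2).2.2.support → dx1 = dx2 := by
        intro dx1 dx2 h1 h2
        by_cases heq : xf dx1 = xf dx2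
        · apply Subtype.ext
          rw [← hxfeq dx1, ← hxfeq dx2, heq]
        · exfalso
          have hsymm : Symmetric (fun x y : zzCW E0 =>
              ∀ r, r ∈ x.2.2.support → r ∈ y.2.2.support → r ∈ P.support) := by
            intro x y hxy r hr1 hr2
            exact hxy r hr2 hr1
          haveI : Std.Symm (fun x y : zzCW E0 =>
              ∀ r, r ∈ x.2.2.support → r ∈ y.2.2.support → r ∈ P.support) := ⟨fun a b h => hsymm h⟩
          have := List.Pairwise.forall hLpair (hxfL dx1) (hxfL dx2) heq
          exact hw.2 (this w h1 h2)
      by_cases hex : ∃ dx0 : {d // d ∈ D}, w ∈ (xf dx0).2.2.support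
      · obtain ⟨dx0, hdx0⟩ := hex
        rw [Finset.sum_eq_single dx0]
        · exact hQle _ (hxfL dx0) w
        · intro b _ hbne
          apply zz_ell_zero
          intro f hf hwf
          rw [List.mem_toFinset] at hf
          exact hbne (huniq b dx0 (zz_mem_support_of_mem_edges _ hf hwf) hdx0)
        · intro hc
          exact absurd (Finset.mem_attach _ _) hc
      · push_neg at hex
        rw [Finset.sum_eq_zero]
        · exact zero_le
        · intro dx _
          apply zz_ell_zero
          intro f hf hwf
          rw [List.mem_toFinset] at hf
          exact hex dx (zz_mem_support_of_mem_edges _ hf hwf)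

end ZZHelpers

open SimpleGraph Classical in
set_option maxHeartbeats 1000000 in
/-- Equivalence of the attachment-path contraction ... -/
theorem stmt15 (E0 : Finset (Sym2 ℕ)) (c : Sym2 ℕ → ℕ → NNReal)
    (Vfin : Finset ℕ) (hV : ∀ e ∈ E0, ∀ v, v ∈ e → v ∈ Vfin)
    (s t : ℕ) (hst : s ≠ t)
    (P : (fromEdgeSet (↑E0 : Set (Sym2 ℕ))).Walk s t) (hP : P.IsPath)
    (hPzero : ∀ e ∈ P.edges, ∀ v, c e v = 0) :
    (∀ F, Feas1 E0 P F → ∃ D, Feas2 E0 c P D ∧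
        Cost2 E0 c Vfin P D ≤ Cost1 c Vfin F) ∧
    (∀ D, Feas2 E0 c P D → ∃ F, Feas1 E0 P F ∧
        Cost1 c Vfin F ≤ Cost2 E0 c Vfin P D) ∧
    sInf {a : ENNReal | ∃ F, Feas1 E0 P F ∧ a = (Cost1 c Vfin F : ENNReal)}
      = sInf {a : ENNReal | ∃ D, Feas2 E0 c P D ∧ a = (Cost2 E0 c Vfin P D : ENNReal)} := by
  refine ⟨?_, ?_, ?_⟩
  · intro F hF
    exact zz_dir1 E0 c Vfin s t P hPzero F hF
  · intro D hD
    exact zz_dir2 E0 c Vfin s t hst P D hD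
  · apply le_antisymm
    · apply le_sInf
      rintro a ⟨D, hD, rfl⟩
      obtain ⟨F, hF, hle⟩ := zz_dir2 E0 c Vfin s t hst P D hD
      refine le_trans (sInf_le ⟨F, hF, rfl⟩) ?_
      exact_mod_cast hle
    · apply le_sInf
      rintro a ⟨F, hF, rfl⟩
      obtain ⟨D, hD, hle⟩ := zz_dir1 E0 c Vfin s t P hPzero F hF
      refine le_trans (sInf_le ⟨D, hD, rfl⟩) ?_
      exact_mod_cast hle
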